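/- arXiv:1102.4744 — 9 statements merged into one kernel-verified Lean document; each statement's English description precedes it below -/
import Mathlib

section
/- Let A be real and B > 0 real with A/B not an integer. Then for every m ∈ ℤ: Δ(m, m, A, B) = B, Δ(m+1, m, A, B) = B, and Δ(m+2, m, A, B) = (A + B·(m+1) − 1)·B. -/
open Real

open Filter Finset

noncomputable def Ginv (x : ℝ) : ℝ := (Real.Gamma x)⁻¹

lemma Ginv_succ (x : ℝ) : Ginv x = x * Ginv (x + 1) := by
  by_cases hx : x = 0
  · simp [Ginv, hx, Real.Gamma_zero]
  · rw [Ginv, Ginv, Real.Gamma_add_one hx, mul_inv, ← mul_assoc, mul_inv_cancel₀ hx, one_mul]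

def NI (ν : ℝ) : Prop := ∀ n : ℤ, ν ≠ (n : ℝ)

lemma NI.gamma_ne_zero {ν : ℝ} (hν : NI ν) : Real.Gamma ν ≠ 0 := by
  intro h
  rw [Real.Gamma_eq_zero_iff] at h
  obtain ⟨m, hm⟩ := h
  exact hν (-(m:ℤ)) (by push_cast [hm]; ring)

lemma NI.add_int {ν : ℝ} (hν : NI ν) (j : ℤ) : NI (ν + j) := by
  intro n h
  exact hν (n - j) (by push_cast; linarith)

lemma NI.neg {ν : ℝ} (hν : NI ν) : NI (-ν) := by
  intro n h
  exact hν (-n) (by push_cast; linarith)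

/-- coefficient of the Bessel series -/
noncomputable def bc (ν : ℝ) (m : ℕ) : ℝ :=
  (-1 : ℝ) ^ m * Ginv ((m : ℝ) + ν + 1) / (m.factorial : ℝ)

lemma bc_succ (ν : ℝ) (m : ℕ) :
    bc ν (m + 1) * (((m : ℝ) + 1) * ((m : ℝ) + ν + 1)) = - bc ν m := by
  have h1 : Ginv ((m : ℝ) + ν + 1) = ((m : ℝ) + ν + 1) * Ginv (((m + 1 : ℕ) : ℝ) + ν + 1) := by
    rw [Ginv_succ ((m : ℝ) + ν + 1)]; push_cast; ring_nf
  rw [bc, bc, h1, Nat.factorial_succ]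
  push_cast
  have hm : ((m.factorial : ℝ)) ≠ 0 := by positivity
  field_simp
  ring

lemma summable_bc_norm (ν t : ℝ) (ht : 0 ≤ t) :
    Summable (fun m : ℕ => ‖bc ν m * t ^ m‖) := by
  apply summable_of_ratio_norm_eventually_le (r := 1/2) (by norm_num)
  obtain ⟨N, hN⟩ := exists_nat_gt (2 * t + |ν| + 1)
  filter_upwards [eventually_ge_atTop N] with m hm
  have hm' : (N : ℝ) ≤ (m : ℝ) := by exact_mod_cast hm
  have hν : -(|ν|) ≤ ν := neg_abs_le ν
  have hpos : (2 * t + 1) ≤ ((m : ℝ) + 1) * ((m : ℝ) + ν + 1) := by nlinarith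
  have hP : (0:ℝ) < ((m : ℝ) + 1) * ((m : ℝ) + ν + 1) := by nlinarith
  have habs : |bc ν (m+1)| * (((m:ℝ)+1) * ((m:ℝ)+ν+1)) = |bc ν m| := by
    have h2 : |bc ν (m + 1) * (((m : ℝ) + 1) * ((m : ℝ) + ν + 1))| = |bc ν m| := by
      rw [bc_succ ν m, abs_neg]
    rw [abs_mul, abs_of_pos hP] at h2
    exact h2
  simp only [norm_norm, norm_mul, norm_pow, Real.norm_eq_abs, abs_abs, abs_of_nonneg ht]
  set a := |bc ν (m+1)| * t ^ (m+1) with ha_def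
  set b := |bc ν m| * t ^ m with hb_def
  have ha : 0 ≤ a := by positivity
  have hb : 0 ≤ b := by positivity
  have e1 : a * (((m:ℝ)+1) * ((m:ℝ)+ν+1)) = b * t := by
    rw [ha_def, hb_def, pow_succ]
    linear_combination habs * (t ^ m * t)
  have key : a * (2*t+1) ≤ b * t := by
    nlinarith [mul_le_mul_of_nonneg_left hpos ha]
  have h3 : a ≤ b * t / (2*t+1) := by
    rw [le_div_iff₀ (by linarith)]; exact key
  have h4 : b * t / (2*t+1) ≤ 1/2 * b := by
    rw [div_le_iff₀ (by linarith)]; nlinarith [hb]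
  linarith

lemma summable_bc (ν t : ℝ) (ht : 0 ≤ t) : Summable (fun m : ℕ => bc ν m * t ^ m) :=
  (summable_bc_norm ν t ht).of_norm

/-- Bessel function of the first kind of real order `ν`, for real `z > 0`,
defined by the series `∑ (−1)^m / (m! Γ(m+ν+1)) (z/2)^(2m+ν)` (real powers). -/
noncomputable def besselJ (ν z : ℝ) : ℝ :=
  ∑' m : ℕ, ((-1 : ℝ) ^ m / (m.factorial * Real.Gamma ((m : ℝ) + ν + 1)))
      * (z / 2) ^ (2 * (m : ℝ) + ν)

noncomputable def gg (ν t : ℝ) : ℝ := ∑' m : ℕ, bc ν m * t ^ m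

lemma besselJ_eq {z : ℝ} (hz : 0 < z) (ν : ℝ) :
    besselJ ν z = (z / 2) ^ ν * gg ν ((z / 2) ^ (2:ℕ)) := by
  have hx : 0 < z / 2 := by linarith
  rw [besselJ, gg, ← tsum_mul_left]
  congr 1
  funext m
  have h1 : (z/2) ^ (2 * (m:ℝ) + ν) = ((z/2) ^ (2:ℕ)) ^ m * (z/2) ^ ν := by
    rw [Real.rpow_add hx]
    congr 1
    rw [show (2 * (m:ℝ)) = ((2 * m : ℕ) : ℝ) by push_cast; ring, Real.rpow_natCast, pow_mul]
  rw [h1, bc, Ginv]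
  field_simp

lemma gg_rec (ν t : ℝ) (ht : 0 ≤ t) :
    gg (ν - 1) t + t * gg (ν + 1) t = ν * gg ν t := by
  have s1 : Summable (fun m : ℕ => bc (ν - 1) m * t ^ m) := summable_bc _ t ht
  have s3 : Summable (fun m : ℕ => bc ν m * t ^ m) := summable_bc _ t ht
  have e2 : t * gg (ν + 1) t = ∑' m : ℕ, bc (ν + 1) m * t ^ (m + 1) := by
    rw [gg, ← tsum_mul_left]
    congr 1; funext m; ring
  rw [e2, gg, gg, s1.tsum_eq_zero_add, s3.tsum_eq_zero_add]
  have key : ∀ m : ℕ, bc (ν + 1) m * t ^ (m + 1) =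
      ν * (bc ν (m + 1) * t ^ (m + 1)) - bc (ν - 1) (m + 1) * t ^ (m + 1) := by
    intro m
    have h1 : bc (ν + 1) m = ν * bc ν (m+1) - bc (ν - 1) (m+1) := by
      rw [bc, bc, bc]
      have g1 : Ginv ((m:ℝ) + (ν - 1) + 1) = ((m:ℝ) + ν) * Ginv ((m:ℝ) + ν + 1) := by
        rw [Ginv_succ ((m:ℝ) + (ν - 1) + 1)]; ring_nf
      have g2 : Ginv ((m:ℝ) + ν + 1) = ((m:ℝ) + ν + 1) * Ginv ((m:ℝ) + ν + 2) := by
        rw [Ginv_succ ((m:ℝ) + ν + 1)]; ring_nf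
      have g3 : Ginv (((m+1:ℕ):ℝ) + (ν-1) + 1) = Ginv ((m:ℝ) + ν + 1) := by push_cast; ring_nf
      have g4 : Ginv (((m+1:ℕ):ℝ) + ν + 1) = Ginv ((m:ℝ) + ν + 2) := by push_cast; ring_nf
      rw [g3, g4, g2, Nat.factorial_succ]
      have hm : ((m.factorial : ℝ)) ≠ 0 := by positivity
      push_cast
      field_simp
      ring
    rw [h1]; ring
  calc bc (ν-1) 0 * t ^ 0 + ∑' m : ℕ, bc (ν-1) (m+1) * t ^ (m+1) +
        ∑' m : ℕ, bc (ν+1) m * t ^ (m+1)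
      = bc (ν-1) 0 * t ^ 0 + (∑' m : ℕ, bc (ν-1) (m+1) * t ^ (m+1) +
        ∑' m : ℕ, (ν * (bc ν (m+1) * t ^ (m+1)) - bc (ν-1) (m+1) * t ^ (m+1))) := by
        rw [add_assoc]
        congr 2
        exact tsum_congr key
    _ = bc (ν-1) 0 * t ^ 0 + ∑' m : ℕ, ν * (bc ν (m+1) * t ^ (m+1)) := by
        congr 1
        have hs1 : Summable (fun m : ℕ => bc (ν-1) (m+1) * t ^ (m+1)) :=
          (summable_nat_add_iff (f := fun m : ℕ => bc (ν-1) m * t ^ m) 1).mpr s1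
        have hs3 : Summable (fun m : ℕ => ν * (bc ν (m+1) * t ^ (m+1))) :=
          (((summable_nat_add_iff (f := fun m : ℕ => bc ν m * t ^ m) 1).mpr s3).mul_left ν)
        have hadd := Summable.tsum_add hs1 (hs3.sub hs1)
        rw [← hadd]
        exact tsum_congr fun m => by ring
    _ = ν * (bc ν 0 * t ^ 0) + ∑' m : ℕ, ν * (bc ν (m+1) * t ^ (m+1)) := by
        congr 1
        rw [bc, bc]
        have : Ginv ((0:ℕ) + (ν-1) + 1) = ν * Ginv (((0:ℕ):ℝ) + ν + 1) := by
          push_cast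
          rw [show (0:ℝ) + (ν-1) + 1 = ν by ring, Ginv_succ ν, show ν + 1 = 0 + ν + 1 by ring]
        push_cast at this ⊢
        rw [this]
        simp
    _ = ν * (bc ν 0 * t ^ 0 + ∑' m : ℕ, bc ν (m+1) * t ^ (m+1)) := by
        rw [tsum_mul_left, ← mul_add]

noncomputable def Esum (a b : ℝ) (k : ℕ) : ℝ :=
  ∑ p ∈ Finset.HasAntidiagonal.antidiagonal k,
    Ginv ((p.1 : ℝ) + a) * Ginv ((p.2 : ℝ) + b) / ((p.1.factorial : ℝ) * (p.2.factorial : ℝ))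

lemma Esum_rec (a b : ℝ) (k : ℕ) :
    ((k : ℝ) + 1) * Esum a b (k + 1) = Esum (a + 1) b k + Esum a (b + 1) k := by
  rw [Esum, Finset.mul_sum]
  have hsplit : ∀ p ∈ Finset.HasAntidiagonal.antidiagonal (k + 1),
      ((k : ℝ) + 1) * (Ginv ((p.1 : ℝ) + a) * Ginv ((p.2 : ℝ) + b) /
        ((p.1.factorial : ℝ) * (p.2.factorial : ℝ)))
      = (p.1 : ℝ) * (Ginv ((p.1 : ℝ) + a) * Ginv ((p.2 : ℝ) + b) /
          ((p.1.factorial : ℝ) * (p.2.factorial : ℝ)))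
        + (p.2 : ℝ) * (Ginv ((p.1 : ℝ) + a) * Ginv ((p.2 : ℝ) + b) /
          ((p.1.factorial : ℝ) * (p.2.factorial : ℝ))) := by
    intro p hp
    have := Finset.HasAntidiagonal.mem_antidiagonal.mp hp
    have hc : ((p.1 : ℝ) + (p.2 : ℝ)) = (k : ℝ) + 1 := by exact_mod_cast congrArg (Nat.cast (R := ℝ)) this
    rw [← add_mul, hc]
  rw [Finset.sum_congr rfl hsplit, Finset.sum_add_distrib]
  congr 1
  · rw [Finset.Nat.sum_antidiagonal_succ
      (f := fun p : ℕ × ℕ => (p.1 : ℝ) * (Ginv ((p.1 : ℝ) + a) * Ginv ((p.2 : ℝ) + b) /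
        ((p.1.factorial : ℝ) * (p.2.factorial : ℝ))))]
    simp only [Nat.cast_zero, zero_mul, zero_add, Esum]
    apply Finset.sum_congr rfl
    intro p _
    rw [Nat.factorial_succ]
    have h1 : Ginv ((↑(p.1 + 1) : ℝ) + a) = Ginv ((p.1 : ℝ) + (a + 1)) := by push_cast; ring_nf
    rw [h1]
    have hf : ((p.1.factorial : ℝ)) ≠ 0 := by positivity
    have hf2 : ((p.2.factorial : ℝ)) ≠ 0 := by positivity
    push_cast
    field_simp
  · rw [Finset.Nat.sum_antidiagonal_succ'
      (f := fun p : ℕ × ℕ => (p.2 : ℝ) * (Ginv ((p.1 : ℝ) + a) * Ginv ((p.2 : ℝ) + b) /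
        ((p.1.factorial : ℝ) * (p.2.factorial : ℝ))))]
    simp only [Nat.cast_zero, zero_mul, zero_add, Esum]
    apply Finset.sum_congr rfl
    intro p _
    rw [Nat.factorial_succ]
    have h1 : Ginv ((↑(p.2 + 1) : ℝ) + b) = Ginv ((p.2 : ℝ) + (b + 1)) := by push_cast; ring_nf
    rw [h1]
    have hf : ((p.1.factorial : ℝ)) ≠ 0 := by positivity
    have hf2 : ((p.2.factorial : ℝ)) ≠ 0 := by positivity
    push_cast
    field_simp

lemma Esum_closed : ∀ (k : ℕ) (a b : ℝ), 1 < a + b →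
    Esum a b k = Real.Gamma (2 * (k:ℝ) + a + b - 1) *
      (Ginv ((k:ℝ) + a) * Ginv ((k:ℝ) + b) * Ginv ((k:ℝ) + a + b - 1)) / (k.factorial : ℝ) := by
  intro k
  induction k with
  | zero =>
    intro a b hab
    have h0 : Esum a b 0 = Ginv a * Ginv b := by
      rw [Esum]
      simp [Finset.Nat.antidiagonal_zero]
    have hpos : 0 < a + b - 1 := by linarith
    have hG : Real.Gamma (a + b - 1) ≠ 0 := (Real.Gamma_pos_of_pos hpos).ne'
    rw [h0]
    simp only [Nat.cast_zero, Nat.factorial_zero, Nat.cast_one, div_one]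
    rw [show 2 * (0:ℝ) + a + b - 1 = a + b - 1 by ring, show (0:ℝ) + a = a by ring,
      show (0:ℝ) + b = b by ring]
    rw [Ginv, Ginv, Ginv]
    field_simp
  | succ k ih =>
    intro a b hab
    have hk0 : (0:ℝ) ≤ (k:ℝ) := Nat.cast_nonneg k
    have hrec := Esum_rec a b k
    have h1 := ih (a + 1) b (by linarith)
    have h2 := ih a (b + 1) (by linarith)
    have hk1 : ((k:ℝ) + 1) ≠ 0 := by positivity
    have hE : Esum a b (k + 1) = (Esum (a+1) b k + Esum a (b+1) k) / ((k:ℝ) + 1) := by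
      field_simp
      linarith [hrec]
    have g1 : Ginv ((k:ℝ) + a) = ((k:ℝ) + a) * Ginv ((k:ℝ) + (a + 1)) := by
      rw [Ginv_succ ((k:ℝ) + a)]; ring_nf
    have g2 : Ginv ((k:ℝ) + b) = ((k:ℝ) + b) * Ginv ((k:ℝ) + (b + 1)) := by
      rw [Ginv_succ ((k:ℝ) + b)]; ring_nf
    have gG : Real.Gamma (2 * (k:ℝ) + a + b + 1)
        = Real.Gamma (2 * (k:ℝ) + a + b) * (2 * (k:ℝ) + a + b) := by
      have hne : 2 * (k:ℝ) + a + b ≠ 0 := by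
        have : (0:ℝ) < 2 * (k:ℝ) + a + b := by linarith
        exact this.ne'
      rw [Real.Gamma_add_one hne]; ring
    rw [hE, h1, h2, Nat.factorial_succ]
    push_cast
    rw [show 2 * (k:ℝ) + (a+1) + b - 1 = 2 * (k:ℝ) + a + b by ring,
        show 2 * (k:ℝ) + a + (b+1) - 1 = 2 * (k:ℝ) + a + b by ring,
        show (k:ℝ) + (a+1) + b - 1 = (k:ℝ) + a + b by ring,
        show (k:ℝ) + a + (b+1) - 1 = (k:ℝ) + a + b by ring,
        show 2 * ((k:ℝ)+1) + a + b - 1 = 2*(k:ℝ) + a + b + 1 by ring,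
        show (k:ℝ) + 1 + a + b - 1 = (k:ℝ) + a + b by ring,
        show (k:ℝ) + 1 + a = (k:ℝ) + (a+1) by ring,
        show (k:ℝ) + 1 + b = (k:ℝ) + (b+1) by ring,
        g1, g2, gG]
    have hkf : ((k.factorial : ℝ)) ≠ 0 := by positivity
    field_simp
    ring

lemma Esum_step (ν : ℝ) (k : ℕ) : Esum (ν + 1) (-ν) (k + 1) = Esum (ν + 2) (1 - ν) k := by
  have hrec := Esum_rec (ν + 1) (-ν) k
  have hk1 : ((k:ℝ) + 1) ≠ 0 := by positivity
  have h1 : Esum (ν + 1 + 1) (-ν) k = Esum (ν + 2) (-ν) k := by rw [show ν+1+1 = ν+2 by ring]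
  have h2 : Esum (ν + 1) (-ν + 1) k = Esum (ν + 1) (1 - ν) k := by rw [show -ν+1 = 1-ν by ring]
  have c1 := Esum_closed k (ν + 2) (-ν) (by linarith)
  have c2 := Esum_closed k (ν + 1) (1 - ν) (by linarith)
  have c3 := Esum_closed k (ν + 2) (1 - ν) (by linarith)
  have hE : Esum (ν+1) (-ν) (k + 1) = (Esum (ν+2) (-ν) k + Esum (ν+1) (1-ν) k) / ((k:ℝ) + 1) := by
    rw [← h1, ← h2]
    field_simp
    linarith [hrec]
  rw [hE, c1, c2, c3]
  -- normalize the Gamma/Ginv arguments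
  rw [show 2*(k:ℝ) + (ν+2) + -ν - 1 = 2*(k:ℝ) + 1 by ring,
      show 2*(k:ℝ) + (ν+1) + (1-ν) - 1 = 2*(k:ℝ) + 1 by ring,
      show 2*(k:ℝ) + (ν+2) + (1-ν) - 1 = 2*(k:ℝ) + 1 + 1 by ring,
      show (k:ℝ) + (ν+2) + -ν - 1 = (k:ℝ) + 1 by ring,
      show (k:ℝ) + (ν+1) + (1-ν) - 1 = (k:ℝ) + 1 by ring,
      show (k:ℝ) + (ν+2) + (1-ν) - 1 = (k:ℝ) + 1 + 1 by ring,
      show (k:ℝ) + (ν+1) = (k:ℝ) + ν + 1 by ring,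
      show (k:ℝ) + (ν+2) = (k:ℝ) + ν + 1 + 1 by ring,
      show (k:ℝ) + -ν = (k:ℝ) - ν by ring,
      show (k:ℝ) + (1-ν) = (k:ℝ) - ν + 1 by ring]
  have gG : Real.Gamma (2*(k:ℝ) + 1 + 1) = Real.Gamma (2*(k:ℝ) + 1) * (2*(k:ℝ) + 1) := by
    have hne : 2*(k:ℝ) + 1 ≠ 0 := by positivity
    rw [Real.Gamma_add_one hne]; ring
  have g1 : Ginv ((k:ℝ) + ν + 1) = ((k:ℝ) + ν + 1) * Ginv ((k:ℝ) + ν + 1 + 1) := Ginv_succ _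
  have g2 : Ginv ((k:ℝ) - ν) = ((k:ℝ) - ν) * Ginv ((k:ℝ) - ν + 1) := Ginv_succ _
  have g3 : Ginv ((k:ℝ) + 1) = ((k:ℝ) + 1) * Ginv ((k:ℝ) + 1 + 1) := Ginv_succ _
  rw [gG, g1, g2, g3]
  field_simp
  ring

lemma bc_antidiag (ν : ℝ) (k : ℕ) :
    ∑ p ∈ Finset.HasAntidiagonal.antidiagonal (k+1), bc ν p.1 * bc (-ν-1) p.2
      = -∑ p ∈ Finset.HasAntidiagonal.antidiagonal k, bc (ν+1) p.1 * bc (-ν) p.2 := by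
  have L : ∑ p ∈ Finset.HasAntidiagonal.antidiagonal (k+1), bc ν p.1 * bc (-ν-1) p.2
      = (-1:ℝ)^(k+1) * Esum (ν+1) (-ν) (k+1) := by
    rw [Esum, Finset.mul_sum]
    apply Finset.sum_congr rfl
    intro p hp
    have hps : p.1 + p.2 = k+1 := Finset.HasAntidiagonal.mem_antidiagonal.mp hp
    rw [bc, bc, show (-1:ℝ)^(k+1) = (-1:ℝ)^p.1 * (-1:ℝ)^p.2 by rw [← pow_add, hps],
      show (p.2:ℝ) + (-ν-1) + 1 = (p.2:ℝ) + -ν by ring,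
      show (p.1:ℝ) + ν + 1 = (p.1:ℝ) + (ν+1) by ring]
    ring
  have R : ∑ p ∈ Finset.HasAntidiagonal.antidiagonal k, bc (ν+1) p.1 * bc (-ν) p.2
      = (-1:ℝ)^k * Esum (ν+2) (1-ν) k := by
    rw [Esum, Finset.mul_sum]
    apply Finset.sum_congr rfl
    intro p hp
    have hps : p.1 + p.2 = k := Finset.HasAntidiagonal.mem_antidiagonal.mp hp
    rw [bc, bc, show (-1:ℝ)^k = (-1:ℝ)^p.1 * (-1:ℝ)^p.2 by rw [← pow_add, hps],
      show (p.2:ℝ) + -ν + 1 = (p.2:ℝ) + (1-ν) by ring,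
      show (p.1:ℝ) + (ν+1) + 1 = (p.1:ℝ) + (ν+2) by ring]
    ring
  rw [L, R, Esum_step ν k, pow_succ]
  ring

lemma gg_prod (ν t : ℝ) (ht : 0 ≤ t) :
    gg ν t * gg (-ν-1) t + t * (gg (ν+1) t * gg (-ν) t) = Ginv (ν+1) * Ginv (-ν) := by
  have inner1 : ∀ k : ℕ, (∑ p ∈ Finset.HasAntidiagonal.antidiagonal k,
      (bc ν p.1 * t^p.1) * (bc (-ν-1) p.2 * t^p.2))
      = (∑ p ∈ Finset.HasAntidiagonal.antidiagonal k, bc ν p.1 * bc (-ν-1) p.2) * t^k := by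
    intro k
    rw [Finset.sum_mul]
    apply Finset.sum_congr rfl
    intro p hp
    have hps : p.1 + p.2 = k := Finset.HasAntidiagonal.mem_antidiagonal.mp hp
    rw [← hps, pow_add]
    ring
  have inner2 : ∀ k : ℕ, (∑ p ∈ Finset.HasAntidiagonal.antidiagonal k,
      (bc (ν+1) p.1 * t^p.1) * (bc (-ν) p.2 * t^p.2))
      = (∑ p ∈ Finset.HasAntidiagonal.antidiagonal k, bc (ν+1) p.1 * bc (-ν) p.2) * t^k := by
    intro k
    rw [Finset.sum_mul]
    apply Finset.sum_congr rfl
    intro p hp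
    have hps : p.1 + p.2 = k := Finset.HasAntidiagonal.mem_antidiagonal.mp hp
    rw [← hps, pow_add]
    ring
  have hCP1 : gg ν t * gg (-ν-1) t
      = ∑' k : ℕ, (∑ p ∈ Finset.HasAntidiagonal.antidiagonal k, bc ν p.1 * bc (-ν-1) p.2) * t^k := by
    rw [gg, gg, tsum_mul_tsum_eq_tsum_sum_antidiagonal_of_summable_norm
      (summable_bc_norm ν t ht) (summable_bc_norm (-ν-1) t ht)]
    exact tsum_congr inner1
  have hCP2 : gg (ν+1) t * gg (-ν) t
      = ∑' k : ℕ, (∑ p ∈ Finset.HasAntidiagonal.antidiagonal k, bc (ν+1) p.1 * bc (-ν) p.2) * t^k := by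
    rw [gg, gg, tsum_mul_tsum_eq_tsum_sum_antidiagonal_of_summable_norm
      (summable_bc_norm (ν+1) t ht) (summable_bc_norm (-ν) t ht)]
    exact tsum_congr inner2
  have hs1 : Summable (fun k : ℕ =>
      (∑ p ∈ Finset.HasAntidiagonal.antidiagonal k, bc ν p.1 * bc (-ν-1) p.2) * t^k) := by
    have := (summable_norm_sum_mul_antidiagonal_of_summable_norm
      (summable_bc_norm ν t ht) (summable_bc_norm (-ν-1) t ht)).of_norm
    exact this.congr inner1
  rw [hCP1, hCP2, hs1.tsum_eq_zero_add]
  have e2 : t * (∑' k : ℕ, (∑ p ∈ Finset.HasAntidiagonal.antidiagonal k, bc (ν+1) p.1 * bc (-ν) p.2) * t^k)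
      = ∑' k : ℕ, -((∑ p ∈ Finset.HasAntidiagonal.antidiagonal (k+1), bc ν p.1 * bc (-ν-1) p.2) * t^(k+1)) := by
    rw [← tsum_mul_left]
    apply tsum_congr
    intro k
    rw [bc_antidiag ν k]
    ring
  rw [e2, tsum_neg]
  have hS0 : (∑ p ∈ Finset.HasAntidiagonal.antidiagonal 0, bc ν p.1 * bc (-ν-1) p.2) * t^0
      = Ginv (ν+1) * Ginv (-ν) := by
    rw [Finset.Nat.antidiagonal_zero]
    simp only [Finset.sum_singleton, pow_zero, mul_one]
    rw [bc, bc]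
    norm_num
  rw [hS0]
  ring

/-- Bessel function of the second kind for non-integer real order. -/
noncomputable def besselY (ν z : ℝ) : ℝ :=
  (besselJ ν z * Real.cos (ν * Real.pi) - besselJ (-ν) z) / Real.sin (ν * Real.pi)

lemma NI.sin_ne_zero {ν : ℝ} (hν : NI ν) : Real.sin (ν * Real.pi) ≠ 0 := by
  intro h
  rw [Real.sin_eq_zero_iff] at h
  obtain ⟨n, hn⟩ := h
  exact hν n (mul_right_cancel₀ Real.pi_ne_zero hn).symm

lemma besselJ_rec {B : ℝ} (hB : 0 < B) (ν : ℝ) :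
    besselJ (ν - 1) (2/B) + besselJ (ν + 1) (2/B) = B * ν * besselJ ν (2/B) := by
  have hz : 0 < 2/B := by positivity
  have hx : 0 < (2/B)/2 := by positivity
  set x := (2/B)/2 with hxd
  have hxB : x = 1/B := by rw [hxd]; ring
  have ht : 0 ≤ x^(2:ℕ) := by positivity
  rw [besselJ_eq hz, besselJ_eq hz, besselJ_eq hz, ← hxd]
  have h1 : x ^ (ν+1) = x ^ (ν-1) * x^(2:ℕ) := by
    rw [← Real.rpow_natCast x 2, ← Real.rpow_add hx]
    congr 1
    push_cast
    ring
  have h2 : x ^ ν = x ^ (ν-1) * x := by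
    rw [show x ^ ν = x ^ ((ν-1)+1) by norm_num, Real.rpow_add hx, Real.rpow_one]
  rw [h1, h2]
  have := gg_rec ν (x^(2:ℕ)) ht
  have hBx : B * x = 1 := by rw [hxB]; field_simp
  calc x ^ (ν-1) * gg (ν-1) (x^(2:ℕ)) + x ^ (ν-1) * x^(2:ℕ) * gg (ν+1) (x^(2:ℕ))
      = x ^ (ν-1) * (gg (ν-1) (x^(2:ℕ)) + x^(2:ℕ) * gg (ν+1) (x^(2:ℕ))) := by ring
    _ = x ^ (ν-1) * (ν * gg ν (x^(2:ℕ))) := by rw [this]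
    _ = B * ν * (x ^ (ν-1) * x * gg ν (x^(2:ℕ))) := by
        have : x ^ (ν-1) * x * B = x ^ (ν-1) := by
          rw [mul_assoc, mul_comm x B, hBx, mul_one]
        linear_combination (-ν * gg ν (x ^ (2:ℕ))) * this

lemma besselY_rec {B : ℝ} (hB : 0 < B) {ν : ℝ} (hν : NI ν) :
    besselY (ν - 1) (2/B) + besselY (ν + 1) (2/B) = B * ν * besselY ν (2/B) := by
  have hs := hν.sin_ne_zero
  have hJ := besselJ_rec hB ν
  have hJn := besselJ_rec hB (-ν)
  rw [besselY, besselY, besselY,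
    show (ν-1)*Real.pi = ν*Real.pi - Real.pi by ring,
    show (ν+1)*Real.pi = ν*Real.pi + Real.pi by ring,
    Real.sin_sub_pi, Real.sin_add_pi, Real.cos_sub_pi, Real.cos_add_pi,
    show -(ν-1) = -ν+1 by ring, show -(ν+1) = -ν-1 by ring]
  rw [← add_div, ← mul_div_assoc, div_eq_div_iff (neg_ne_zero.mpr hs) hs]
  linear_combination (-Real.sin (ν*Real.pi) * Real.cos (ν*Real.pi)) * hJ
    + (-Real.sin (ν*Real.pi)) * hJn

lemma refl_Ginv {ν : ℝ} (hν : NI ν) :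
    Ginv (ν+1) * Ginv (-ν) = -(Real.sin (ν*Real.pi))/Real.pi := by
  have h := Real.Gamma_mul_Gamma_one_sub (ν+1)
  rw [show (1:ℝ) - (ν+1) = -ν by ring] at h
  rw [show Real.pi * (ν+1) = ν*Real.pi + Real.pi by ring, Real.sin_add_pi] at h
  have hs := hν.sin_ne_zero
  rw [Ginv, Ginv, ← mul_inv, h]
  field_simp

lemma wronskian {B : ℝ} (hB : 0 < B) {ν : ℝ} (hν : NI ν) :
    Real.pi * (besselJ (ν+1) (2/B) * besselY ν (2/B)
      - besselJ ν (2/B) * besselY (ν+1) (2/B)) = B := by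
  have hs := hν.sin_ne_zero
  have hz : 0 < 2/B := by positivity
  have hx : 0 < (2/B)/2 := by positivity
  set x := (2/B)/2 with hxd
  have hxB : x = 1/B := by rw [hxd]; ring
  have ht : 0 ≤ x^(2:ℕ) := by positivity
  have hprod : Real.pi * (besselJ (ν+1) (2/B) * besselJ (-ν) (2/B)
      + besselJ ν (2/B) * besselJ (-ν-1) (2/B)) = -B * Real.sin (ν*Real.pi) := by
    rw [besselJ_eq hz, besselJ_eq hz, besselJ_eq hz, besselJ_eq hz, ← hxd]
    have e1 : x ^ (ν+1) * gg (ν+1) (x^(2:ℕ)) * (x ^ (-ν) * gg (-ν) (x^(2:ℕ)))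
        + x ^ ν * gg ν (x^(2:ℕ)) * (x ^ (-ν-1) * gg (-ν-1) (x^(2:ℕ)))
        = x⁻¹ * (gg ν (x^(2:ℕ)) * gg (-ν-1) (x^(2:ℕ))
            + x^(2:ℕ) * (gg (ν+1) (x^(2:ℕ)) * gg (-ν) (x^(2:ℕ)))) := by
      have p1 : x ^ (ν+1) * x ^ (-ν) = x⁻¹ * x^(2:ℕ) := by
        rw [← Real.rpow_add hx, ← Real.rpow_natCast x 2, ← Real.rpow_neg_one x,
          ← Real.rpow_add hx]
        congr 1; push_cast; ring
      have p2 : x ^ ν * x ^ (-ν-1) = x⁻¹ := by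
        rw [← Real.rpow_add hx, ← Real.rpow_neg_one x]
        congr 1; ring
      calc x ^ (ν+1) * gg (ν+1) (x^(2:ℕ)) * (x ^ (-ν) * gg (-ν) (x^(2:ℕ)))
          + x ^ ν * gg ν (x^(2:ℕ)) * (x ^ (-ν-1) * gg (-ν-1) (x^(2:ℕ)))
          = (x ^ (ν+1) * x ^ (-ν)) * (gg (ν+1) (x^(2:ℕ)) * gg (-ν) (x^(2:ℕ)))
            + (x ^ ν * x ^ (-ν-1)) * (gg ν (x^(2:ℕ)) * gg (-ν-1) (x^(2:ℕ))) := by ring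
        _ = x⁻¹ * (gg ν (x^(2:ℕ)) * gg (-ν-1) (x^(2:ℕ))
            + x^(2:ℕ) * (gg (ν+1) (x^(2:ℕ)) * gg (-ν) (x^(2:ℕ)))) := by rw [p1, p2]; ring
    rw [e1, gg_prod ν (x^(2:ℕ)) ht, refl_Ginv hν]
    have hxinv : x⁻¹ = B := by rw [hxB]; field_simp
    rw [hxinv]
    field_simp
  have hY1 : besselY (ν+1) (2/B) = (besselJ (ν+1) (2/B) * Real.cos (ν*Real.pi)
      + besselJ (-ν-1) (2/B)) / Real.sin (ν*Real.pi) := by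
    rw [besselY, show (ν+1)*Real.pi = ν*Real.pi + Real.pi by ring,
      Real.sin_add_pi, Real.cos_add_pi, show -(ν+1) = -ν-1 by ring,
      show besselJ (ν+1) (2/B) * -Real.cos (ν*Real.pi) - besselJ (-ν-1) (2/B)
        = -(besselJ (ν+1) (2/B) * Real.cos (ν*Real.pi) + besselJ (-ν-1) (2/B)) by ring,
      neg_div_neg_eq]
  rw [besselY, hY1]
  rw [show besselJ (ν+1) (2/B) * ((besselJ ν (2/B) * Real.cos (ν*Real.pi)
        - besselJ (-ν) (2/B)) / Real.sin (ν*Real.pi))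
      - besselJ ν (2/B) * ((besselJ (ν+1) (2/B) * Real.cos (ν*Real.pi)
        + besselJ (-ν-1) (2/B)) / Real.sin (ν*Real.pi))
      = (-(besselJ (ν+1) (2/B) * besselJ (-ν) (2/B)
          + besselJ ν (2/B) * besselJ (-ν-1) (2/B))) / Real.sin (ν*Real.pi) by ring,
    ← mul_div_assoc, div_eq_iff hs]
  linear_combination -hprod

/-- `Ĵ_n = J_{n+A/B}(2/B)`. -/
noncomputable def Jhat (A B : ℝ) (n : ℤ) : ℝ := besselJ ((n : ℝ) + A / B) (2 / B)

/-- `Ŷ_n = Y_{n+A/B}(2/B)`. -/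
noncomputable def Yhat (A B : ℝ) (n : ℤ) : ℝ := besselY ((n : ℝ) + A / B) (2 / B)

/-- `Υ(n, m, A, B) = π (Ĵ_n Ŷ_m − Ĵ_m Ŷ_n)`. -/
noncomputable def Ups (n m : ℤ) (A B : ℝ) : ℝ :=
  Real.pi * (Jhat A B n * Yhat A B m - Jhat A B m * Yhat A B n)
/-- `Δ(n, m, A, B) = Υ(n, m, A, B) − Υ(n−1, m, A, B)`. -/
noncomputable def Dlt (n m : ℤ) (A B : ℝ) : ℝ := Ups n m A B - Ups (n - 1) m A B

/-- For real `A` and `B > 0` with `A/B` not an integer, for every `m ∈ ℤ`: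
`Δ(m,m,A,B) = B`, `Δ(m+1,m,A,B) = B` and `Δ(m+2,m,A,B) = (A + B(m+1) − 1) B`. -/
theorem stmt_2 (A B : ℝ) (hB : 0 < B) (hAB : ∀ k : ℤ, A / B ≠ (k : ℝ)) :
    ∀ m : ℤ, Dlt m m A B = B ∧ Dlt (m + 1) m A B = B ∧
      Dlt (m + 2) m A B = (A + B * ((m : ℝ) + 1) - 1) * B := by
  have hBne : B ≠ 0 := hB.ne'
  have hNI : ∀ n : ℤ, NI ((n:ℝ) + A/B) := by
    intro n k h
    exact hAB (k - n) (by push_cast; linarith)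
  have hw : ∀ n : ℤ, Real.pi * (Jhat A B (n+1) * Yhat A B n
      - Jhat A B n * Yhat A B (n+1)) = B := by
    intro n
    have h := wronskian hB (hNI n)
    have e1 : ((n+1 : ℤ):ℝ) + A/B = ((n:ℝ) + A/B) + 1 := by push_cast; ring
    rw [Jhat, Yhat, Jhat, Yhat, e1]
    exact h
  have hBA : B * (A/B) = A := by field_simp
  have hrecJ : ∀ n : ℤ, Jhat A B (n-1) + Jhat A B (n+1) = (B*(n:ℝ) + A) * Jhat A B n := by
    intro n
    have h := besselJ_rec hB ((n:ℝ) + A/B)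
    have e1 : ((n-1 : ℤ):ℝ) + A/B = ((n:ℝ) + A/B) - 1 := by push_cast; ring
    have e2 : ((n+1 : ℤ):ℝ) + A/B = ((n:ℝ) + A/B) + 1 := by push_cast; ring
    rw [Jhat, Jhat, Jhat, e1, e2, h]
    linear_combination (besselJ ((n:ℝ) + A/B) (2/B)) * hBA
  have hrecY : ∀ n : ℤ, Yhat A B (n-1) + Yhat A B (n+1) = (B*(n:ℝ) + A) * Yhat A B n := by
    intro n
    have h := besselY_rec hB (hNI n)
    have e1 : ((n-1 : ℤ):ℝ) + A/B = ((n:ℝ) + A/B) - 1 := by push_cast; ring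
    have e2 : ((n+1 : ℤ):ℝ) + A/B = ((n:ℝ) + A/B) + 1 := by push_cast; ring
    rw [Yhat, Yhat, Yhat, e1, e2, h]
    linear_combination (besselY ((n:ℝ) + A/B) (2/B)) * hBA
  intro m
  refine ⟨?_, ?_, ?_⟩
  · have h := hw (m-1)
    rw [show m-1+1 = m by ring] at h
    rw [Dlt, Ups, Ups]
    linear_combination h
  · have h := hw m
    rw [Dlt, show m+1-1 = m by ring, Ups, Ups]
    linear_combination h
  · have h := hw m
    have hJ := hrecJ (m+1)
    have hY := hrecY (m+1)
    rw [show m+1-1 = m by ring, show m+1+1 = m+2 by ring] at hJ hY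
    push_cast at hJ hY
    rw [Dlt, show m+2-1 = m+1 by ring, Ups, Ups]
    linear_combination Real.pi * Yhat A B m * hJ - Real.pi * Jhat A B m * hY
      + (B * ((m:ℝ)+1) + A - 1) * h
end

section
/- Fix a real number z > 0 and a real number c. Then as n → ∞ over the natural numbers, Γ(n + c + 1)·(2/z)^{n+c}·J_{n+c}(z) tends to 1. -/
open Real

lemma gamma_le_gamma_add_nat (ν : ℝ) (hν : 0 ≤ ν) (m : ℕ) :
    Real.Gamma (ν + 1) ≤ Real.Gamma (ν + 1 + m) := by
  induction m with
  | zero => simp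
  | succ k ih =>
    have h1 : (0:ℝ) < ν + 1 + k := by positivity
    have h2 : Real.Gamma (ν + 1 + (k+1:ℕ)) = (ν + 1 + k) * Real.Gamma (ν + 1 + k) := by
      rw [show (ν + 1 + ((k:ℕ)+1:ℕ) : ℝ) = (ν + 1 + k) + 1 by push_cast; ring,
        Real.Gamma_add_one (ne_of_gt h1)]
    rw [h2]
    have hG : 0 < Real.Gamma (ν + 1 + k) := Real.Gamma_pos_of_pos h1
    nlinarith [ih]

lemma gamma_mul_le_gamma_add_nat (ν : ℝ) (hν : 0 ≤ ν) (m : ℕ) :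
    (ν + 1) * Real.Gamma (ν + 1) ≤ Real.Gamma (ν + 1 + (m + 1 : ℕ)) := by
  have h1 : (0:ℝ) < ν + 1 + m := by positivity
  have h2 : Real.Gamma (ν + 1 + (m+1:ℕ)) = (ν + 1 + m) * Real.Gamma (ν + 1 + m) := by
    rw [show (ν + 1 + ((m:ℕ)+1:ℕ) : ℝ) = (ν + 1 + m) + 1 by push_cast; ring,
      Real.Gamma_add_one (ne_of_gt h1)]
  rw [h2]
  have hG : 0 < Real.Gamma (ν + 1) := Real.Gamma_pos_of_pos (by positivity)
  have := gamma_le_gamma_add_nat ν hν m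
  nlinarith

lemma key_bound (z : ℝ) (hz : 0 < z) (ν : ℝ) (hν : 0 ≤ ν) :
    |Real.Gamma (ν + 1) * (2 / z) ^ ν * besselJ ν z - 1| ≤
      (∑' m : ℕ, ((z/2)^2) ^ (m+1) / ((m+1).factorial : ℝ)) / (ν + 1) := by
  set w : ℝ := (z/2)^2 with hw_def
  have hw : 0 ≤ w := by positivity
  have hz2 : (0:ℝ) < z/2 := by positivity
  have hν1 : (0:ℝ) < ν + 1 := by positivity
  have hGpos : 0 < Real.Gamma (ν + 1) := Real.Gamma_pos_of_pos hν1
  set g : ℕ → ℝ := fun m =>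
    (-1:ℝ)^m * Real.Gamma (ν+1) / (m.factorial * Real.Gamma ((m:ℝ) + ν + 1)) * w^m with hg_def
  have hGm : ∀ m : ℕ, 0 < Real.Gamma ((m:ℝ) + ν + 1) := fun m =>
    Real.Gamma_pos_of_pos (by positivity)
  -- Step A: rewrite the product as a tsum of g
  have stepA : Real.Gamma (ν + 1) * (2 / z) ^ ν * besselJ ν z = ∑' m, g m := by
    rw [besselJ, ← tsum_mul_left]
    congr 1
    ext m
    have hpow2m : (z/2) ^ (2 * (m:ℝ)) = w ^ m := by
      rw [show (2 * (m:ℝ)) = ((2*m : ℕ) : ℝ) by push_cast; ring, rpow_natCast, pow_mul]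
    have hsplit : (z/2) ^ (2 * (m:ℝ) + ν) = w ^ m * (z/2) ^ ν := by
      rw [rpow_add hz2, hpow2m]
    have h1 : (2/z) ^ ν * (z/2) ^ ν = 1 := by
      rw [← mul_rpow (by positivity) (by positivity),
        show (2/z) * (z/2) = 1 by field_simp]
      exact one_rpow ν
    rw [hsplit]
    calc Real.Gamma (ν + 1) * (2 / z) ^ ν *
          ((-1:ℝ)^m / (m.factorial * Real.Gamma ((m:ℝ) + ν + 1)) * (w ^ m * (z/2) ^ ν))
        = ((2/z) ^ ν * (z/2) ^ ν) *
          ((-1:ℝ)^m * Real.Gamma (ν+1) / (m.factorial * Real.Gamma ((m:ℝ) + ν + 1)) * w^m) := by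
          ring
      _ = g m := by rw [h1, one_mul]
  -- absolute value of g
  have habs : ∀ m : ℕ,
      |g m| = Real.Gamma (ν+1) / (m.factorial * Real.Gamma ((m:ℝ) + ν + 1)) * w^m := by
    intro m
    rw [hg_def]
    have hfacpos : (0:ℝ) < (m.factorial : ℝ) := by exact_mod_cast m.factorial_pos
    rw [abs_mul, abs_div, abs_mul, abs_pow, abs_neg, abs_one, one_pow, one_mul,
      abs_of_nonneg (pow_nonneg hw m), abs_of_pos hGpos,
      abs_of_pos (mul_pos hfacpos (hGm m))]
  -- summability of g
  have hsum_exp : Summable (fun m : ℕ => w^m / (m.factorial : ℝ)) :=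
    Real.summable_pow_div_factorial w
  have hbound0 : ∀ m : ℕ, |g m| ≤ w^m / (m.factorial : ℝ) := by
    intro m
    rw [habs m]
    have hle : Real.Gamma (ν+1) ≤ Real.Gamma ((m:ℝ) + ν + 1) := by
      have := gamma_le_gamma_add_nat ν hν m
      rwa [show (ν + 1 + (m:ℝ)) = (m:ℝ) + ν + 1 by ring] at this
    have hfac : (0:ℝ) < m.factorial := by positivity
    have h1 : Real.Gamma (ν+1) / (m.factorial * Real.Gamma ((m:ℝ) + ν + 1))
        ≤ 1 / (m.factorial : ℝ) := by
      rw [div_le_div_iff₀ (by positivity) hfac]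
      nlinarith [hGm m]
    calc Real.Gamma (ν+1) / (m.factorial * Real.Gamma ((m:ℝ) + ν + 1)) * w^m
        ≤ 1 / (m.factorial : ℝ) * w^m :=
          mul_le_mul_of_nonneg_right h1 (pow_nonneg hw m)
      _ = w^m / (m.factorial : ℝ) := by ring
  have hsum_g : Summable g := by
    apply Summable.of_norm_bounded hsum_exp
    intro m
    simpa using hbound0 m
  -- split off the m = 0 term
  have hsplit0 : ∑' m, g m = g 0 + ∑' m, g (m+1) := hsum_g.tsum_eq_zero_add
  have hg0 : g 0 = 1 := by
    simp only [hg_def, pow_zero, Nat.factorial_zero, Nat.cast_zero, Nat.cast_one, zero_add,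
      one_mul, mul_one]
    rw [div_self (ne_of_gt hGpos)]
  -- bound the tail
  have hsumB : Summable (fun m : ℕ => w^(m+1) / (((m+1).factorial : ℝ))) := by
    exact (summable_nat_add_iff 1).mpr hsum_exp
  have htail_bound : ∀ m : ℕ,
      |g (m+1)| ≤ w^(m+1) / (((m+1).factorial : ℝ)) * (1/(ν+1)) := by
    intro m
    rw [habs (m+1)]
    have hle : (ν + 1) * Real.Gamma (ν+1) ≤ Real.Gamma (((m+1:ℕ):ℝ) + ν + 1) := by
      have := gamma_mul_le_gamma_add_nat ν hν m
      rwa [show (ν + 1 + ((m+1:ℕ):ℝ)) = ((m+1:ℕ):ℝ) + ν + 1 by push_cast; ring] at this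
    have hfac : (0:ℝ) < ((m+1).factorial : ℝ) := by positivity
    have h1 : Real.Gamma (ν+1) / ((m+1).factorial * Real.Gamma (((m+1:ℕ):ℝ) + ν + 1))
        ≤ 1 / (((m+1).factorial : ℝ) * (ν+1)) := by
      rw [div_le_div_iff₀ (by positivity) (by positivity)]
      have hG2 := hGm (m+1)
      nlinarith
    calc Real.Gamma (ν+1) / ((m+1).factorial * Real.Gamma (((m+1:ℕ):ℝ) + ν + 1)) * w^(m+1)
        ≤ 1 / (((m+1).factorial : ℝ) * (ν+1)) * w^(m+1) :=
          mul_le_mul_of_nonneg_right h1 (pow_nonneg hw _)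
      _ = w^(m+1) / (((m+1).factorial : ℝ)) * (1/(ν+1)) := by
          field_simp
  have hsum_tail : Summable (fun m : ℕ => g (m+1)) := (summable_nat_add_iff 1).mpr hsum_g
  have hsum_absB : Summable (fun m : ℕ => w^(m+1) / (((m+1).factorial : ℝ)) * (1/(ν+1))) :=
    hsumB.mul_right _
  have htail : |∑' m, g (m+1)| ≤
      (∑' m : ℕ, w ^ (m+1) / ((m+1).factorial : ℝ)) / (ν + 1) := by
    calc |∑' m, g (m+1)| ≤ ∑' m, |g (m+1)| := by
          simpa using norm_tsum_le_tsum_norm (f := fun m => g (m+1)) (by simpa using hsum_tail.abs)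
      _ ≤ ∑' m : ℕ, w^(m+1) / (((m+1).factorial : ℝ)) * (1/(ν+1)) :=
          Summable.tsum_le_tsum htail_bound hsum_tail.abs hsum_absB
      _ = (∑' m : ℕ, w ^ (m+1) / ((m+1).factorial : ℝ)) * (1/(ν+1)) := tsum_mul_right
      _ = (∑' m : ℕ, w ^ (m+1) / ((m+1).factorial : ℝ)) / (ν + 1) := by ring
  rw [stepA, hsplit0, hg0]
  simpa using htail

/-- For fixed real `z > 0` and real `c`, as `n → ∞` over the naturals,
`Γ(n + c + 1) (2/z)^(n+c) J_{n+c}(z) → 1`. -/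
theorem stmt_4 (z : ℝ) (hz : 0 < z) (c : ℝ) :
    Filter.Tendsto
      (fun n : ℕ =>
        Real.Gamma ((n : ℝ) + c + 1) * (2 / z) ^ ((n : ℝ) + c) * besselJ ((n : ℝ) + c) z)
      Filter.atTop (nhds 1) := by
  set C : ℝ := ∑' m : ℕ, ((z/2)^2) ^ (m+1) / ((m+1).factorial : ℝ) with hC
  set F : ℕ → ℝ := fun n =>
    Real.Gamma ((n : ℝ) + c + 1) * (2 / z) ^ ((n : ℝ) + c) * besselJ ((n : ℝ) + c) z with hF
  have hnc : Filter.Tendsto (fun n : ℕ => (n:ℝ) + c) Filter.atTop Filter.atTop :=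
    Filter.tendsto_atTop_add_const_right _ c tendsto_natCast_atTop_atTop
  have hev : ∀ᶠ n : ℕ in Filter.atTop, ‖F n - 1‖ ≤ C / ((n:ℝ) + c + 1) := by
    filter_upwards [hnc.eventually_ge_atTop 0] with n hn
    have := key_bound z hz ((n:ℝ) + c) hn
    simpa [hF, hC, Real.norm_eq_abs] using this
  have hlim : Filter.Tendsto (fun n : ℕ => C / ((n:ℝ) + c + 1)) Filter.atTop (nhds 0) := by
    apply Filter.Tendsto.div_atTop tendsto_const_nhds
    exact Filter.tendsto_atTop_add_const_right _ 1 hnc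
  have h0 : Filter.Tendsto (fun n : ℕ => F n - 1) Filter.atTop (nhds 0) :=
    squeeze_zero_norm' hev hlim
  have := h0.add (tendsto_const_nhds (x := (1:ℝ)))
  simpa using this
end

section
/- Let λ > 0 with 2/λ not an integer, and set A = 2+λ and B = λ. Then for every n ≥ 1: a_n = ((2λ²+8λ+5)·Δ(n,1,A,B) − (λ+3)·Δ(n,2,A,B))/λ and b_n = ((2λ²+4λ+1)·Δ(n,1,A,B) − (λ+1)·Δ(n,2,A,B))/λ. -/
open Real

namespace StmtAux

open Finset

lemma inv_Gamma_step (x : ℝ) : (Real.Gamma x)⁻¹ = x * (Real.Gamma (x + 1))⁻¹ := by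
  rcases eq_or_ne x 0 with h | h
  · simp [h, Real.Gamma_zero]
  · rw [Real.Gamma_add_one h, mul_inv, ← mul_assoc, mul_inv_cancel₀ h, one_mul]

noncomputable def bt (ν z : ℝ) (m : ℕ) : ℝ :=
  ((-1 : ℝ) ^ m / (m.factorial * Real.Gamma ((m : ℝ) + ν + 1)))
      * (z / 2) ^ (2 * (m : ℝ) + ν)

lemma besselJ_eq (ν z : ℝ) : besselJ ν z = ∑' m, bt ν z m := rfl

lemma one_le_Gamma {x : ℝ} (hx : 2 ≤ x) : 1 ≤ Real.Gamma x := by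
  rw [← Real.Gamma_two]
  exact (Real.Gamma_strictMonoOn_Ici.monotoneOn (by simp) hx hx)

lemma bt_norm_summable (ν z : ℝ) (hz : 0 < z) : Summable fun m : ℕ => ‖bt ν z m‖ := by
  have hw : (0:ℝ) < z / 2 := by linarith
  obtain ⟨N, hN⟩ : ∃ N : ℕ, (1:ℝ) - ν ≤ N := exists_nat_ge (1 - ν)
  rw [← summable_nat_add_iff N]
  have hb : ∀ m : ℕ, ‖bt ν z (m + N)‖ ≤ (z/2) ^ (ν + 2*(N:ℝ)) * (((z/2)^2) ^ m / m.factorial) := by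
    intro m
    have hΓ : 1 ≤ Real.Gamma (((m + N : ℕ) : ℝ) + ν + 1) := by
      apply one_le_Gamma
      push_cast
      linarith [(Nat.cast_nonneg m : (0:ℝ) ≤ (m:ℝ))]
    have hfac : (m.factorial : ℝ) ≤ ((m + N).factorial : ℝ) := by
      exact_mod_cast Nat.factorial_le (Nat.le_add_right m N)
    have hfacpos : (0:ℝ) < m.factorial := by positivity
    have habs : ‖bt ν z (m + N)‖
        = (z/2) ^ (2 * ((m + N : ℕ) : ℝ) + ν) / (((m + N).factorial : ℝ) * Real.Gamma (((m + N : ℕ) : ℝ) + ν + 1)) := by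
      rw [bt, Real.norm_eq_abs, abs_mul, abs_div, abs_pow, abs_neg, abs_one, one_pow,
        abs_of_pos (Real.rpow_pos_of_pos hw _), abs_of_pos (by positivity : (0:ℝ) < ((m + N).factorial : ℝ) * Real.Gamma (((m + N : ℕ) : ℝ) + ν + 1)), one_div, div_eq_mul_inv, mul_comm, ← div_eq_mul_inv]
    rw [habs]
    have hexp : (z/2) ^ (2 * ((m + N : ℕ) : ℝ) + ν) = (z/2) ^ (ν + 2*(N:ℝ)) * ((z/2)^2) ^ m := by
      rw [show 2 * ((m + N : ℕ) : ℝ) + ν = (ν + 2*(N:ℝ)) + ((2*m : ℕ) : ℝ) by push_cast; ring,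
        Real.rpow_add hw, Real.rpow_natCast, pow_mul]
    rw [hexp]
    rw [div_eq_mul_inv, mul_assoc, div_eq_mul_inv]
    apply mul_le_mul_of_nonneg_left _ (Real.rpow_pos_of_pos hw _).le
    apply mul_le_mul_of_nonneg_left _ (by positivity)
    apply inv_anti₀ hfacpos
    calc (m.factorial : ℝ) = (m.factorial : ℝ) * 1 := by ring
    _ ≤ ((m + N).factorial : ℝ) * Real.Gamma (((m + N : ℕ) : ℝ) + ν + 1) := by
        apply mul_le_mul hfac hΓ zero_le_one (by positivity)
  apply Summable.of_nonneg_of_le (fun m => norm_nonneg _) hb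
  exact ((Real.summable_pow_div_factorial ((z/2)^2)).mul_left _)

lemma bt_summable (ν z : ℝ) (hz : 0 < z) : Summable (bt ν z) :=
  (bt_norm_summable ν z hz).of_norm

lemma besselJ_rec (ν z : ℝ) (hz : 0 < z) :
    besselJ (ν - 1) z + besselJ (ν + 1) z = (2 * ν / z) * besselJ ν z := by
  have hw : (0:ℝ) < z / 2 := by linarith
  set g : ℕ → ℝ := fun m => (2 * ν / z) * bt ν z m - bt (ν - 1) z m with hgdef
  have hgsum : Summable g := ((bt_summable ν z hz).mul_left _).sub (bt_summable (ν-1) z hz)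
  have hz' : z ≠ 0 := ne_of_gt hz
  have hgm : ∀ m : ℕ, g m = (-1 : ℝ) ^ m * (-(m:ℝ))
      * ((m.factorial : ℝ)⁻¹ * (Real.Gamma ((m : ℝ) + ν + 1))⁻¹)
      * (z / 2) ^ (2 * (m : ℝ) + ν - 1) := by
    intro m
    have hsplit := Real.rpow_add hw (2 * (m:ℝ) + ν - 1) 1
    rw [show 2 * (m:ℝ) + ν - 1 + 1 = 2 * (m:ℝ) + ν from by ring, Real.rpow_one] at hsplit
    have hG : (Real.Gamma ((m:ℝ) + ν))⁻¹ = ((m:ℝ) + ν) * (Real.Gamma ((m:ℝ) + ν + 1))⁻¹ :=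
      inv_Gamma_step _
    have h1 : bt (ν - 1) z m = ((-1 : ℝ) ^ m * ((m.factorial : ℝ)⁻¹ * ((m:ℝ) + ν)
        * (Real.Gamma ((m : ℝ) + ν + 1))⁻¹)) * (z / 2) ^ (2 * (m : ℝ) + ν - 1) := by
      rw [bt, show (m:ℝ) + (ν - 1) + 1 = (m:ℝ) + ν from by ring,
        show 2 * (m:ℝ) + (ν - 1) = 2 * (m:ℝ) + ν - 1 from by ring, div_eq_mul_inv, mul_inv, hG]
      ring
    have h2 : (2 * ν / z) * bt ν z m = (-1 : ℝ) ^ m * ν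
        * ((m.factorial : ℝ)⁻¹ * (Real.Gamma ((m : ℝ) + ν + 1))⁻¹)
        * (z / 2) ^ (2 * (m : ℝ) + ν - 1) := by
      have hzz : 2 * ν / z * (z/2) = ν := by field_simp
      calc (2 * ν / z) * bt ν z m
          = (2 * ν / z * (z/2)) * (((-1:ℝ)^m / (m.factorial * Real.Gamma ((m:ℝ) + ν + 1)))
            * (z/2) ^ (2*(m:ℝ) + ν - 1)) := by rw [bt, hsplit]; ring
        _ = ν * (((-1:ℝ)^m / (m.factorial * Real.Gamma ((m:ℝ) + ν + 1)))
            * (z/2) ^ (2*(m:ℝ) + ν - 1)) := by rw [hzz]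
        _ = _ := by rw [div_eq_mul_inv, mul_inv]; ring
    calc g m = (2 * ν / z) * bt ν z m - bt (ν - 1) z m := rfl
    _ = _ := by rw [h1, h2]; ring
  have hg0 : g 0 = 0 := by rw [hgm]; simp
  have hgsucc : ∀ m : ℕ, g (m + 1) = bt (ν + 1) z m := by
    intro m
    rw [hgm, bt]
    have hfac : (((m+1).factorial : ℝ))⁻¹ = ((m:ℝ)+1)⁻¹ * (m.factorial : ℝ)⁻¹ := by
      rw [Nat.factorial_succ]; push_cast; rw [mul_inv]
    have hGarg : ((m + 1 : ℕ) : ℝ) + ν + 1 = (m:ℝ) + (ν + 1) + 1 := by push_cast; ring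
    have hexp : 2 * ((m + 1 : ℕ) : ℝ) + ν - 1 = 2 * (m:ℝ) + (ν + 1) := by push_cast; ring
    have hm1 : ((m:ℝ) + 1) ≠ 0 := by positivity
    rw [hGarg, hexp, hfac, pow_succ]
    set W := (z/2) ^ (2*(m:ℝ) + (ν+1)) with hW
    simp only [div_eq_mul_inv, mul_inv]
    push_cast
    linear_combination ((-1:ℝ)^m * (m.factorial:ℝ)⁻¹
      * (Real.Gamma ((m:ℝ) + (ν+1) + 1))⁻¹ * W) * mul_inv_cancel₀ hm1
  have key : ∑' m, g m = besselJ (ν + 1) z := by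
    rw [hgsum.tsum_eq_zero_add, hg0, zero_add, besselJ_eq]
    exact tsum_congr hgsucc
  have hsplit2 : ∑' m, g m = (2 * ν / z) * besselJ ν z - besselJ (ν - 1) z := by
    rw [hgdef, Summable.tsum_sub ((bt_summable ν z hz).mul_left _) (bt_summable (ν-1) z hz),
      tsum_mul_left, besselJ_eq, besselJ_eq]
  rw [key] at hsplit2
  linarith


noncomputable def hh (ν : ℝ) (i j : ℕ) : ℝ :=
  ((i.factorial : ℝ) * Real.Gamma ((i:ℝ) + ν + 1))⁻¹
    * ((j.factorial : ℝ) * Real.Gamma ((j:ℝ) + 1 - ν))⁻¹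

lemma succ_mul_hh (ν : ℝ) (i j : ℕ) :
    ((i:ℝ)+1) * hh ν (i+1) j
      = ((i.factorial:ℝ))⁻¹ * (Real.Gamma ((i:ℝ)+1+ν+1))⁻¹
        * (((j.factorial:ℝ))⁻¹ * (Real.Gamma ((j:ℝ)+1-ν))⁻¹) := by
  have hi1 : ((i:ℝ)+1) ≠ 0 := by positivity
  rw [hh, show (((i+1:ℕ)):ℝ) + ν + 1 = (i:ℝ)+1+ν+1 from by push_cast; ring,
    Nat.factorial_succ i]
  push_cast
  simp only [mul_inv]
  linear_combination ((i.factorial:ℝ)⁻¹ * (Real.Gamma ((i:ℝ)+1+ν+1))⁻¹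
    * (j.factorial:ℝ)⁻¹ * (Real.Gamma ((j:ℝ)+1-ν))⁻¹) * mul_inv_cancel₀ hi1

lemma sub_mul_hh (ν : ℝ) (i j : ℕ) :
    ((j:ℝ)-ν) * hh ν i j
      = ((i.factorial:ℝ))⁻¹ * (Real.Gamma ((i:ℝ)+ν+1))⁻¹
        * (((j.factorial:ℝ))⁻¹ * (Real.Gamma ((j:ℝ)-ν))⁻¹) := by
  rw [hh]
  simp only [mul_inv]
  rw [inv_Gamma_step ((j:ℝ)-ν), show (j:ℝ)-ν+1 = (j:ℝ)+1-ν from by ring]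
  ring

lemma core_h (ν : ℝ) (i j : ℕ) :
    ((i:ℝ)+1) * ((i:ℝ)+1+ν) * hh ν (i+1) j
      = ((j:ℝ)+1) * ((j:ℝ)+1-ν) * hh ν i (j+1) := by
  have hi : ((i:ℝ)+1) ≠ 0 := by positivity
  have hj : ((j:ℝ)+1) ≠ 0 := by positivity
  rw [hh, hh, show (((i+1:ℕ)):ℝ) + ν + 1 = ((i:ℝ) + ν + 1) + 1 from by push_cast; ring,
    show (((j+1:ℕ)):ℝ) + 1 - ν = ((j:ℝ) + 1 - ν) + 1 from by push_cast; ring,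
    Nat.factorial_succ i, Nat.factorial_succ j]
  push_cast
  simp only [mul_inv]
  rw [inv_Gamma_step ((i:ℝ) + ν + 1), inv_Gamma_step ((j:ℝ) + 1 - ν)]
  set A := (Real.Gamma ((i:ℝ) + ν + 1 + 1))⁻¹
  set B := (Real.Gamma ((j:ℝ) + 1 - ν + 1))⁻¹
  set K := ((i:ℝ) + ν + 1) * ((j:ℝ) + 1 - ν) * (i.factorial:ℝ)⁻¹ * (j.factorial:ℝ)⁻¹ * A * B
    with hK
  linear_combination K * mul_inv_cancel₀ hi - K * mul_inv_cancel₀ hj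

lemma tele (ν : ℝ) (k : ℕ) :
    ∑ i ∈ Finset.range (k+2), ((((k+1-i : ℕ)):ℝ) - ν - (i:ℝ)) * hh ν i (k+1-i) = 0 := by
  have hN : ((k:ℝ)+1) ≠ 0 := by positivity
  apply mul_left_cancel₀ hN
  rw [mul_zero, Finset.mul_sum]
  set τ : ℕ → ℝ := fun i => if i ≤ k+1 then (-(i:ℝ))*((i:ℝ)+ν)* hh ν i (k+1-i) else 0 with hτ
  have hpt : ∀ i ∈ Finset.range (k+2),
      ((k:ℝ)+1) * (((((k+1-i : ℕ)):ℝ) - ν - (i:ℝ)) * hh ν i (k+1-i)) = τ i - τ (i+1) := by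
    intro i hi
    have hik : i ≤ k + 1 := by
      have := Finset.mem_range.mp hi; omega
    rcases Nat.lt_or_ge i (k+1) with hlt | hge
    · have e1 : k + 1 - i = (k - i) + 1 := by omega
      have e2 : k + 1 - (i+1) = k - i := by omega
      rw [hτ]
      simp only [if_pos hik, if_pos (by omega : i + 1 ≤ k + 1)]
      rw [e1, e2]
      set j' := k - i with hj'
      have hk : (i:ℝ) + (j':ℝ) = (k:ℝ) := by
        have h5 : i + j' = k := by omega
        exact_mod_cast congrArg (Nat.cast : ℕ → ℝ) h5
      push_cast
      rw [← hk]
      linear_combination (-1 : ℝ) * core_h ν i j'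
    · have hieq : i = k + 1 := by omega
      subst hieq
      rw [hτ]
      simp only [if_pos (le_refl (k+1)), if_neg (by omega : ¬ (k+1+1 ≤ k+1)), Nat.sub_self]
      push_cast
      ring
  rw [Finset.sum_congr rfl hpt, Finset.sum_range_sub' τ (k+2)]
  rw [hτ]
  simp

lemma besselJ_prod (ν z : ℝ) (hz : 0 < z) :
    besselJ (ν+1) z * besselJ (-ν) z + besselJ ν z * besselJ (-ν-1) z
      = - 2 * Real.sin (Real.pi * ν) / (Real.pi * z) := by
  have hw : (0:ℝ) < z / 2 := by linarith
  have hz' : z ≠ 0 := ne_of_gt hz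
  set F : ℕ → ℝ := fun k => ∑ kl ∈ HasAntidiagonal.antidiagonal k, bt (ν+1) z kl.1 * bt (-ν) z kl.2
    with hFdef
  set G : ℕ → ℝ := fun k => ∑ kl ∈ HasAntidiagonal.antidiagonal k, bt ν z kl.1 * bt (-ν-1) z kl.2
    with hGdef
  have hF : besselJ (ν+1) z * besselJ (-ν) z = ∑' k, F k := by
    rw [besselJ_eq, besselJ_eq]
    exact tsum_mul_tsum_eq_tsum_sum_antidiagonal_of_summable_norm
      (bt_norm_summable _ _ hz) (bt_norm_summable _ _ hz)
  have hG : besselJ ν z * besselJ (-ν-1) z = ∑' k, G k := by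
    rw [besselJ_eq, besselJ_eq]
    exact tsum_mul_tsum_eq_tsum_sum_antidiagonal_of_summable_norm
      (bt_norm_summable _ _ hz) (bt_norm_summable _ _ hz)
  have hFs : Summable F := (summable_norm_sum_mul_antidiagonal_of_summable_norm
      (bt_norm_summable _ _ hz) (bt_norm_summable _ _ hz)).of_norm
  have hGs : Summable G := (summable_norm_sum_mul_antidiagonal_of_summable_norm
      (bt_norm_summable _ _ hz) (bt_norm_summable _ _ hz)).of_norm
  have hbt1 : ∀ k i j : ℕ, i + j = k → bt (ν+1) z i * bt (-ν) z j
      = (-1:ℝ)^k * (z/2) ^ (2*(k:ℝ)+1) * (((i:ℝ)+1) * hh ν (i+1) j) := by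
    intro k i j hij
    have hcast : (i:ℝ) + (j:ℝ) = (k:ℝ) := by exact_mod_cast congrArg (Nat.cast : ℕ → ℝ) hij
    have hpow : (z/2) ^ (2*(i:ℝ)+(ν+1)) * (z/2) ^ (2*(j:ℝ)+(-ν))
        = (z/2) ^ (2*(k:ℝ)+1) := by
      rw [← Real.rpow_add hw]
      congr 1
      linarith
    have hsign : (-1:ℝ)^i * (-1:ℝ)^j = (-1:ℝ)^k := by rw [← pow_add, hij]
    rw [bt, bt, show (i:ℝ) + (ν+1) + 1 = (i:ℝ)+1+ν+1 from by ring,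
      show (j:ℝ) + (-ν) + 1 = (j:ℝ)+1-ν from by ring, succ_mul_hh, ← hsign, ← hpow]
    simp only [div_eq_mul_inv, mul_inv]
    ring
  have hbt2 : ∀ k i j : ℕ, i + j = k → bt ν z i * bt (-ν-1) z j
      = (-1:ℝ)^k * (z/2) ^ (2*(k:ℝ)-1) * (((j:ℝ)-ν) * hh ν i j) := by
    intro k i j hij
    have hcast : (i:ℝ) + (j:ℝ) = (k:ℝ) := by exact_mod_cast congrArg (Nat.cast : ℕ → ℝ) hij
    have hpow : (z/2) ^ (2*(i:ℝ)+ν) * (z/2) ^ (2*(j:ℝ)+(-ν-1))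
        = (z/2) ^ (2*(k:ℝ)-1) := by
      rw [← Real.rpow_add hw]
      congr 1
      linarith
    have hsign : (-1:ℝ)^i * (-1:ℝ)^j = (-1:ℝ)^k := by rw [← pow_add, hij]
    rw [bt, bt, show (j:ℝ) + (-ν-1) + 1 = (j:ℝ)-ν from by ring, sub_mul_hh, ← hsign, ← hpow]
    simp only [div_eq_mul_inv, mul_inv]
    ring
  have hFk : ∀ k : ℕ, F k = (-1:ℝ)^k * (z/2) ^ (2*(k:ℝ)+1)
      * ∑ i ∈ Finset.range (k+1), (((i:ℝ)+1) * hh ν (i+1) (k-i)) := by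
    intro k
    show (∑ kl ∈ HasAntidiagonal.antidiagonal k, bt (ν+1) z kl.1 * bt (-ν) z kl.2) = _
    rw [Finset.Nat.sum_antidiagonal_eq_sum_range_succ (fun i j => bt (ν+1) z i * bt (-ν) z j) k,
      Finset.mul_sum]
    apply Finset.sum_congr rfl
    intro i hi
    exact hbt1 k i (k-i) (by have := Finset.mem_range.mp hi; omega)
  have hGk : ∀ k : ℕ, G k = (-1:ℝ)^k * (z/2) ^ (2*(k:ℝ)-1)
      * ∑ i ∈ Finset.range (k+1), ((((k-i:ℕ):ℝ)-ν) * hh ν i (k-i)) := by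
    intro k
    show (∑ kl ∈ HasAntidiagonal.antidiagonal k, bt ν z kl.1 * bt (-ν-1) z kl.2) = _
    rw [Finset.Nat.sum_antidiagonal_eq_sum_range_succ (fun i j => bt ν z i * bt (-ν-1) z j) k,
      Finset.mul_sum]
    apply Finset.sum_congr rfl
    intro i hi
    exact hbt2 k i (k-i) (by have := Finset.mem_range.mp hi; omega)
  have hcancel : ∀ k : ℕ, F k + G (k+1) = 0 := by
    intro k
    rw [hFk k, hGk (k+1)]
    have hexp : (z/2) ^ (2*((k+1:ℕ):ℝ)-1) = (z/2) ^ (2*(k:ℝ)+1) := by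
      congr 1
      push_cast
      ring
    have hshift : ∑ i ∈ Finset.range (k+1), (((i:ℝ)+1) * hh ν (i+1) (k-i))
        = ∑ i ∈ Finset.range (k+2), ((i:ℝ) * hh ν i (k+1-i)) := by
      rw [Finset.sum_range_succ' (fun i => (i:ℝ) * hh ν i (k+1-i)) (k+1)]
      simp only [Nat.cast_zero, zero_mul, add_zero, Nat.succ_sub_succ_eq_sub]
      apply Finset.sum_congr rfl
      intro i _
      push_cast
      ring
    have htele : ∑ i ∈ Finset.range (k+2), ((((k+1-i:ℕ):ℝ)-ν) * hh ν i (k+1-i))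
        - ∑ i ∈ Finset.range (k+2), ((i:ℝ) * hh ν i (k+1-i)) = 0 := by
      rw [← Finset.sum_sub_distrib, ← tele ν k]
      apply Finset.sum_congr rfl
      intro i _
      ring
    rw [hexp, hshift, pow_succ]
    simp only [show k+1+1 = k+2 from rfl]
    linear_combination (-((-1:ℝ)^k) * (z/2) ^ (2*(k:ℝ)+1)) * htele
  have hG0 : G 0 = - 2 * Real.sin (Real.pi * ν) / (Real.pi * z) := by
    show (∑ kl ∈ HasAntidiagonal.antidiagonal 0, bt ν z kl.1 * bt (-ν-1) z kl.2) = _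
    rw [HasAntidiagonal.antidiagonal_zero, Finset.sum_singleton]
    rw [bt, bt]
    have hrefl := Real.Gamma_mul_Gamma_one_sub (-ν)
    rw [show (1:ℝ) - -ν = ν + 1 from by ring, show Real.pi * -ν = -(Real.pi * ν) from by ring,
      Real.sin_neg] at hrefl
    have hpow : (z/2) ^ (2*((0:ℕ):ℝ)+ν) * (z/2) ^ (2*((0:ℕ):ℝ)+(-ν-1)) = (z/2)⁻¹ := by
      rw [← Real.rpow_add hw, show 2*((0:ℕ):ℝ)+ν + (2*((0:ℕ):ℝ)+(-ν-1)) = -1 from by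
        push_cast; ring, Real.rpow_neg_one]
    have h0 : ((0:ℕ):ℝ) + ν + 1 = ν + 1 := by push_cast; ring
    have h1 : ((0:ℕ):ℝ) + (-ν-1) + 1 = -ν := by push_cast; ring
    rw [h0, h1]
    have hG2 : Real.Gamma (-ν) * Real.Gamma (ν+1) = Real.pi / (-Real.sin (Real.pi * ν)) := hrefl
    have hinv : (Real.Gamma (ν+1))⁻¹ * (Real.Gamma (-ν))⁻¹ = - Real.sin (Real.pi * ν) / Real.pi := by
      rw [← mul_inv, mul_comm, hG2, inv_div]
    calc ((-1:ℝ)^(0:ℕ) / ((Nat.factorial 0 : ℝ) * Real.Gamma (ν+1))) * (z/2) ^ (2*((0:ℕ):ℝ)+ν)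
          * (((-1:ℝ)^(0:ℕ) / ((Nat.factorial 0 : ℝ) * Real.Gamma (-ν))) * (z/2) ^ (2*((0:ℕ):ℝ)+(-ν-1)))
        = ((Real.Gamma (ν+1))⁻¹ * (Real.Gamma (-ν))⁻¹)
            * ((z/2) ^ (2*((0:ℕ):ℝ)+ν) * (z/2) ^ (2*((0:ℕ):ℝ)+(-ν-1))) := by
          simp only [Nat.factorial, Nat.cast_one, pow_zero, one_mul, one_div]
          try ring
      _ = (- Real.sin (Real.pi * ν) / Real.pi) * (z/2)⁻¹ := by rw [hinv, hpow]
      _ = - 2 * Real.sin (Real.pi * ν) / (Real.pi * z) := by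
          have hπ : (Real.pi : ℝ) ≠ 0 := Real.pi_ne_zero
          field_simp
  have hGs' : Summable (fun k => G (k+1)) := by
    rw [summable_nat_add_iff]
    exact hGs
  have h1 : ∑' k, (F k + G (k+1)) = 0 := by
    rw [tsum_congr hcancel, tsum_zero]
  have h2 : ∑' k, (F k + G (k+1)) = ∑' k, F k + ∑' k, G (k+1) := hFs.tsum_add hGs'
  rw [hF, hG, hGs.tsum_eq_zero_add, hG0]
  linarith

lemma besselY_rec (ν z : ℝ) (hz : 0 < z) (hs : Real.sin (ν * Real.pi) ≠ 0) :
    besselY (ν - 1) z + besselY (ν + 1) z = (2 * ν / z) * besselY ν z := by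
  have hz' : z ≠ 0 := ne_of_gt hz
  have hJ1 := besselJ_rec ν z hz
  have hJ2 := besselJ_rec (-ν) z hz
  have hJ1' : z * (besselJ (ν-1) z + besselJ (ν+1) z) = 2 * ν * besselJ ν z := by
    rw [hJ1]; field_simp
  have hJ2' : z * (besselJ (-ν-1) z + besselJ (-ν+1) z) = -(2 * ν) * besselJ (-ν) z := by
    rw [hJ2]; field_simp
  rw [besselY, besselY, besselY]
  rw [show (ν - 1) * Real.pi = ν * Real.pi - Real.pi from by ring,
      show (ν + 1) * Real.pi = ν * Real.pi + Real.pi from by ring,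
      Real.sin_sub_pi, Real.cos_sub_pi, Real.sin_add_pi, Real.cos_add_pi,
      show -(ν-1) = -ν+1 from by ring, show -(ν+1) = -ν-1 from by ring]
  have hzz : z * z⁻¹ = 1 := mul_inv_cancel₀ hz'
  simp only [div_eq_mul_inv, inv_neg]
  linear_combination (Real.cos (ν*Real.pi) * (Real.sin (ν*Real.pi))⁻¹ * z⁻¹) * hJ1'
    + ((Real.sin (ν*Real.pi))⁻¹ * z⁻¹) * hJ2'
    - ((besselJ (ν-1) z + besselJ (ν+1) z) * Real.cos (ν*Real.pi)
       + (besselJ (-ν+1) z + besselJ (-ν-1) z)) * (Real.sin (ν*Real.pi))⁻¹ * hzz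

section Params

variable (l : ℝ)

lemma sin_nu_ne (hl : 0 < l) (hint : ∀ k : ℤ, (2 / l : ℝ) ≠ (k : ℝ)) (n : ℤ) :
    Real.sin (((n : ℝ) + (2+l)/l) * Real.pi) ≠ 0 := by
  have hl' : l ≠ 0 := ne_of_gt hl
  intro h
  rw [Real.sin_eq_zero_iff] at h
  obtain ⟨m, hm⟩ := h
  have hπ : Real.pi ≠ 0 := Real.pi_ne_zero
  have hme : (m:ℝ) = (n : ℝ) + (2+l)/l := by
    have := mul_right_cancel₀ hπ hm
    linarith
  have h2 : (2 / l : ℝ) = ((m - n - 1 : ℤ) : ℝ) := by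
    push_cast
    rw [hme]
    field_simp
    ring
  exact hint _ h2

lemma Jhat_rec (hl : 0 < l) (n : ℤ) :
    Jhat (2+l) l (n+1) = (l*(n:ℝ) + 2 + l) * Jhat (2+l) l n - Jhat (2+l) l (n-1) := by
  have hl' : l ≠ 0 := ne_of_gt hl
  have hz : (0:ℝ) < 2/l := by positivity
  have h := besselJ_rec ((n:ℝ) + (2+l)/l) (2/l) hz
  have e3 : 2*((n:ℝ) + (2+l)/l)/(2/l) = l*(n:ℝ)+2+l := by field_simp; ring
  rw [e3] at h
  rw [Jhat, Jhat, Jhat]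
  push_cast
  rw [show (n:ℝ)+1 + (2+l)/l = ((n:ℝ) + (2+l)/l) + 1 from by ring,
    show (n:ℝ)-1 + (2+l)/l = ((n:ℝ) + (2+l)/l) - 1 from by ring]
  linarith

lemma Yhat_rec (hl : 0 < l) (hint : ∀ k : ℤ, (2 / l : ℝ) ≠ (k : ℝ)) (n : ℤ) :
    Yhat (2+l) l (n+1) = (l*(n:ℝ) + 2 + l) * Yhat (2+l) l n - Yhat (2+l) l (n-1) := by
  have hl' : l ≠ 0 := ne_of_gt hl
  have hz : (0:ℝ) < 2/l := by positivity
  have h := besselY_rec ((n:ℝ) + (2+l)/l) (2/l) hz (sin_nu_ne l hl hint n)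
  have e3 : 2*((n:ℝ) + (2+l)/l)/(2/l) = l*(n:ℝ)+2+l := by field_simp; ring
  rw [e3] at h
  rw [Yhat, Yhat, Yhat]
  push_cast
  rw [show (n:ℝ)+1 + (2+l)/l = ((n:ℝ) + (2+l)/l) + 1 from by ring,
    show (n:ℝ)-1 + (2+l)/l = ((n:ℝ) + (2+l)/l) - 1 from by ring]
  linarith

lemma Ups_rec (hl : 0 < l) (hint : ∀ k : ℤ, (2 / l : ℝ) ≠ (k : ℝ)) (n m : ℤ) :
    Ups (n+1) m (2+l) l = (l*(n:ℝ) + 2 + l) * Ups n m (2+l) l - Ups (n-1) m (2+l) l := by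
  rw [Ups, Ups, Ups, Jhat_rec l hl n, Yhat_rec l hl hint n]
  ring

lemma Ups_wronskian (hl : 0 < l) (hint : ∀ k : ℤ, (2 / l : ℝ) ≠ (k : ℝ)) (n : ℤ) :
    Ups (n+1) n (2+l) l = l := by
  have hl' : l ≠ 0 := ne_of_gt hl
  have hz : (0:ℝ) < 2/l := by positivity
  have hπ : Real.pi ≠ 0 := Real.pi_ne_zero
  rw [Ups, Jhat, Jhat, Yhat, Yhat, besselY, besselY]
  push_cast
  rw [show (n:ℝ)+1 + (2+l)/l = ((n:ℝ) + (2+l)/l) + 1 from by ring]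
  set ν := (n:ℝ) + (2+l)/l with hν
  rw [show (ν + 1) * Real.pi = ν * Real.pi + Real.pi from by ring,
    Real.sin_add_pi, Real.cos_add_pi, show -(ν+1) = -ν-1 from by ring]
  have hs : Real.sin (ν * Real.pi) ≠ 0 := sin_nu_ne l hl hint n
  have hprod : besselJ (ν+1) (2/l) * besselJ (-ν) (2/l)
      + besselJ ν (2/l) * besselJ (-ν-1) (2/l)
      = -(l * Real.sin (ν*Real.pi)) * Real.pi⁻¹ := by
    have h := besselJ_prod ν (2/l) hz
    rw [show Real.pi * ν = ν * Real.pi from mul_comm _ _] at h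
    rw [h]
    field_simp
  set J1 := besselJ (ν+1) (2/l) with hJ1
  set J0 := besselJ ν (2/l) with hJ0
  set R := besselJ (-ν) (2/l) with hR
  set Q := besselJ (-ν-1) (2/l) with hQ
  set s := Real.sin (ν*Real.pi) with hsd
  set C := Real.cos (ν*Real.pi) with hC
  have hss : s * s⁻¹ = 1 := mul_inv_cancel₀ hs
  have hpp : Real.pi * Real.pi⁻¹ = 1 := mul_inv_cancel₀ hπ
  simp only [div_eq_mul_inv, inv_neg]
  linear_combination (- Real.pi * s⁻¹) * hprod
    + (l * Real.pi * Real.pi⁻¹) * hss + l * hpp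
end Params

lemma Dlt_rec (l : ℝ) (hl : 0 < l) (hint : ∀ k : ℤ, (2 / l : ℝ) ≠ (k : ℝ)) (n m : ℤ) :
    Dlt (n+4) m (2+l) l = (l*((n:ℝ)+4)+3) * Dlt (n+3) m (2+l) l
      - (l*((n:ℝ)+2)+3) * Dlt (n+2) m (2+l) l + Dlt (n+1) m (2+l) l := by
  have E0 := Ups_rec l hl hint (n+1) m
  have E1 := Ups_rec l hl hint (n+2) m
  have E2 := Ups_rec l hl hint (n+3) m
  rw [show (n+1+1 : ℤ) = n+2 from by ring, show (n+1-1 : ℤ) = n from by ring] at E0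
  rw [show (n+2+1 : ℤ) = n+3 from by ring, show (n+2-1 : ℤ) = n+1 from by ring] at E1
  rw [show (n+3+1 : ℤ) = n+4 from by ring, show (n+3-1 : ℤ) = n+2 from by ring] at E2
  push_cast at E0 E1 E2
  rw [Dlt, Dlt, Dlt, Dlt]
  rw [show (n+4-1 : ℤ) = n+3 from by ring, show (n+3-1 : ℤ) = n+2 from by ring,
    show (n+2-1 : ℤ) = n+1 from by ring, show (n+1-1 : ℤ) = n from by ring]
  linear_combination E2 - 2*E1 + E0


end StmtAux

open StmtAux in
/-- With `λ > 0`, `2/λ` not an integer, `A = 2+λ`, `B = λ`, the sequences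
`a_n`, `b_n` (given initial values and the three-term recursion) satisfy, for `n ≥ 1`,
`a_n = ((2λ²+8λ+5) Δ(n,1,A,B) − (λ+3) Δ(n,2,A,B))/λ` and
`b_n = ((2λ²+4λ+1) Δ(n,1,A,B) − (λ+1) Δ(n,2,A,B))/λ`. -/
theorem stmt_6 (l : ℝ) (hl : 0 < l) (hint : ∀ k : ℤ, (2 / l : ℝ) ≠ (k : ℝ))
    (a b : ℕ → ℝ)
    (ha0 : a 0 = 1) (ha1 : a 1 = 2 + l) (ha2 : a 2 = 2 * l ^ 2 + 7 * l + 2)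
    (ha3 : a 3 = 6 * l ^ 3 + 26 * l ^ 2 + 22 * l + 2)
    (hb0 : b 0 = 0) (hb1 : b 1 = l) (hb2 : b 2 = 2 * l ^ 2 + 3 * l)
    (hb3 : b 3 = 6 * l ^ 3 + 14 * l ^ 2 + 6 * l)
    (harec : ∀ n : ℕ, 4 ≤ n →
      a n = (l * (n : ℝ) + 3) * a (n - 1) - (l * ((n : ℝ) - 2) + 3) * a (n - 2)
            + a (n - 3))
    (hbrec : ∀ n : ℕ, 4 ≤ n →
      b n = (l * (n : ℝ) + 3) * b (n - 1) - (l * ((n : ℝ) - 2) + 3) * b (n - 2)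
            + b (n - 3)) :
    ∀ n : ℕ, 1 ≤ n →
      a n = ((2 * l ^ 2 + 8 * l + 5) * Dlt (n : ℤ) 1 (2 + l) l
              - (l + 3) * Dlt (n : ℤ) 2 (2 + l) l) / l ∧
      b n = ((2 * l ^ 2 + 4 * l + 1) * Dlt (n : ℤ) 1 (2 + l) l
              - (l + 1) * Dlt (n : ℤ) 2 (2 + l) l) / l := by
  have hl' : l ≠ 0 := ne_of_gt hl
  have hW := Ups_wronskian l hl hint
  have h10 : Ups 1 0 (2+l) l = l := by have h := hW 0; norm_num at h; exact h
  have h21 : Ups 2 1 (2+l) l = l := by have h := hW 1; norm_num at h; exact h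
  have h32 : Ups 3 2 (2+l) l = l := by have h := hW 2; norm_num at h; exact h
  have h11 : Ups 1 1 (2+l) l = 0 := by rw [Ups]; ring
  have h22 : Ups 2 2 (2+l) l = 0 := by rw [Ups]; ring
  have h01 : Ups 0 1 (2+l) l = -l := by
    have h : Ups 0 1 (2+l) l = - Ups 1 0 (2+l) l := by rw [Ups, Ups]; ring
    rw [h, h10]
  have h12 : Ups 1 2 (2+l) l = -l := by
    have h : Ups 1 2 (2+l) l = - Ups 2 1 (2+l) l := by rw [Ups, Ups]; ring
    rw [h, h21]
  have h02 : Ups 0 2 (2+l) l = -(2*l+2)*l := by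
    have h := Ups_rec l hl hint 1 2
    norm_num at h
    rw [h22, h12] at h
    linarith
  have h31 : Ups 3 1 (2+l) l = (l*2+2+l)*l := by
    have h := Ups_rec l hl hint 2 1
    norm_num at h
    rw [h21, h11] at h
    linarith
  have hD11 : Dlt 1 1 (2+l) l = l := by
    rw [Dlt, show (1-1 : ℤ) = 0 from by ring, h11, h01]; ring
  have hD21 : Dlt 2 1 (2+l) l = l := by
    rw [Dlt, show (2-1 : ℤ) = 1 from by ring, h21, h11]; ring
  have hD31 : Dlt 3 1 (2+l) l = 3*l^2 + l := by
    rw [Dlt, show (3-1 : ℤ) = 2 from by ring, h31, h21]; ring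
  have hD12 : Dlt 1 2 (2+l) l = 2*l^2 + l := by
    rw [Dlt, show (1-1 : ℤ) = 0 from by ring, h12, h02]; ring
  have hD22 : Dlt 2 2 (2+l) l = l := by
    rw [Dlt, show (2-1 : ℤ) = 1 from by ring, h22, h12]; ring
  have hD32 : Dlt 3 2 (2+l) l = l := by
    rw [Dlt, show (3-1 : ℤ) = 2 from by ring, h32, h22]; ring
  have key : ∀ n : ℕ, 1 ≤ n →
      l * a n = (2 * l ^ 2 + 8 * l + 5) * Dlt (n : ℤ) 1 (2 + l) l
              - (l + 3) * Dlt (n : ℤ) 2 (2 + l) l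
      ∧ l * b n = (2 * l ^ 2 + 4 * l + 1) * Dlt (n : ℤ) 1 (2 + l) l
              - (l + 1) * Dlt (n : ℤ) 2 (2 + l) l := by
    intro n
    induction n using Nat.strong_induction_on with
    | _ n ih =>
      intro hn
      by_cases h3 : n ≤ 3
      · interval_cases n
        · constructor
          · push_cast; rw [ha1, hD11, hD12]; ring
          · push_cast; rw [hb1, hD11, hD12]; ring
        · constructor
          · push_cast; rw [ha2, hD21, hD22]; ring
          · push_cast; rw [hb2, hD21, hD22]; ring
        · constructor
          · push_cast; rw [ha3, hD31, hD32]; ring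
          · push_cast; rw [hb3, hD31, hD32]; ring
      · obtain ⟨k, rfl⟩ : ∃ k, n = k + 4 := ⟨n - 4, by omega⟩
        have ih1 := ih (k+1) (by omega) (by omega)
        have ih2 := ih (k+2) (by omega) (by omega)
        have ih3 := ih (k+3) (by omega) (by omega)
        have hA := harec (k+4) (by omega)
        have hB := hbrec (k+4) (by omega)
        rw [show k+4-1 = k+3 from rfl, show k+4-2 = k+2 from rfl,
          show k+4-3 = k+1 from rfl] at hA hB
        have hr1 := Dlt_rec l hl hint (k : ℤ) 1
        have hr2 := Dlt_rec l hl hint (k : ℤ) 2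
        push_cast at hA hB hr1 hr2 ih1 ih2 ih3 ⊢
        constructor
        · linear_combination l * hA + (l*((k:ℝ)+4)+3) * ih3.1 - (l*((k:ℝ)+2)+3) * ih2.1
            + ih1.1 - (2*l^2+8*l+5) * hr1 + (l+3) * hr2
        · linear_combination l * hB + (l*((k:ℝ)+4)+3) * ih3.2 - (l*((k:ℝ)+2)+3) * ih2.2
            + ih1.2 - (2*l^2+4*l+1) * hr1 + (l+1) * hr2
  intro n hn
  obtain ⟨h1, h2⟩ := key n hn
  constructor
  · rw [eq_div_iff hl']; linarith
  · rw [eq_div_iff hl']; linarith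
end

section
/- Let λ > 0. Then the real number D = (2λ²+8λ+5)·J_{2+2/λ}(2/λ) − (λ+3)·J_{3+2/λ}(2/λ) is nonzero, and the sequence b_n/a_n converges as n → ∞ to ((2λ²+4λ+1)·J_{2+2/λ}(2/λ) − (λ+1)·J_{3+2/λ}(2/λ))/D. -/
open Real

noncomputable def bterm (μ z : ℝ) (m : ℕ) : ℝ :=
  ((-1:ℝ)^m / (m.factorial * Real.Gamma ((m:ℝ) + μ + 1))) * (z/2) ^ (2*(m:ℝ)+μ)

lemma besselJ_eq_s7 (μ z : ℝ) : besselJ μ z = ∑' m, bterm μ z m := rfl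

lemma bterm_eq (μ z : ℝ) (hz : 0 < z) (m : ℕ) :
    bterm μ z m = (-1:ℝ)^m * ((z/2) ^ μ) * ((z/2)^2)^m / (m.factorial * Real.Gamma ((m:ℝ)+μ+1)) := by
  have hz2 : (0:ℝ) < z/2 := by linarith
  unfold bterm
  rw [show (2*(m:ℝ)+μ) = ((2*m:ℕ):ℝ) + μ by push_cast; ring, Real.rpow_add hz2,
    Real.rpow_natCast, pow_mul]
  ring

lemma Gamma_fact_le (μ : ℝ) (hμ : 0 < μ) : ∀ m : ℕ,
    Real.Gamma (μ+1) * m.factorial ≤ Real.Gamma ((m:ℝ)+μ+1) := by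
  intro m
  induction m with
  | zero => simp
  | succ m ih =>
    have h1 : ((m:ℝ)+μ+1) ≠ 0 := by positivity
    have h2 : Real.Gamma (((m+1:ℕ):ℝ)+μ+1) = ((m:ℝ)+μ+1) * Real.Gamma ((m:ℝ)+μ+1) := by
      rw [show ((m+1:ℕ):ℝ)+μ+1 = ((m:ℝ)+μ+1)+1 by push_cast; ring, Real.Gamma_add_one h1]
    rw [h2]
    have hg : 0 < Real.Gamma (μ+1) := Real.Gamma_pos_of_pos (by linarith)
    have hmf : (1:ℝ) ≤ m.factorial := by exact_mod_cast Nat.one_le_iff_ne_zero.2 m.factorial_ne_zero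
    calc Real.Gamma (μ+1) * ((m+1:ℕ).factorial : ℝ)
        = ((m:ℝ)+1) * (Real.Gamma (μ+1) * m.factorial) := by
          rw [Nat.factorial_succ]; push_cast; ring
      _ ≤ ((m:ℝ)+μ+1) * (Real.Gamma (μ+1) * m.factorial) := by
          apply mul_le_mul_of_nonneg_right (by linarith) (by positivity)
      _ ≤ ((m:ℝ)+μ+1) * Real.Gamma ((m:ℝ)+μ+1) := by
          apply mul_le_mul_of_nonneg_left ih (by positivity)

lemma Gamma_geom_le (μ : ℝ) (hμ : 0 < μ) : ∀ m : ℕ,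
    Real.Gamma (μ+1) * (μ+1)^m ≤ Real.Gamma ((m:ℝ)+μ+1) := by
  intro m
  induction m with
  | zero => simp
  | succ m ih =>
    have h1 : ((m:ℝ)+μ+1) ≠ 0 := by positivity
    have h2 : Real.Gamma (((m+1:ℕ):ℝ)+μ+1) = ((m:ℝ)+μ+1) * Real.Gamma ((m:ℝ)+μ+1) := by
      rw [show ((m+1:ℕ):ℝ)+μ+1 = ((m:ℝ)+μ+1)+1 by push_cast; ring, Real.Gamma_add_one h1]
    rw [h2]
    have hg : 0 < Real.Gamma (μ+1) := Real.Gamma_pos_of_pos (by linarith)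
    calc Real.Gamma (μ+1) * (μ+1)^(m+1) = (μ+1) * (Real.Gamma (μ+1) * (μ+1)^m) := by ring
      _ ≤ ((m:ℝ)+μ+1) * (Real.Gamma (μ+1) * (μ+1)^m) := by
          have hm0 : (0:ℝ) ≤ (m:ℝ) := Nat.cast_nonneg m
          apply mul_le_mul_of_nonneg_right (by linarith) (by positivity)
      _ ≤ ((m:ℝ)+μ+1) * Real.Gamma ((m:ℝ)+μ+1) := by
          apply mul_le_mul_of_nonneg_left ih (by positivity)

lemma bterm_abs_le (μ z : ℝ) (hz : 0 < z) (hμ : 0 < μ) (m : ℕ) :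
    |bterm μ z m| ≤ ((z/2)^μ / Real.Gamma (μ+1)) * (((z/2)^2)^m / m.factorial) := by
  have hz2 : (0:ℝ) < z/2 := by linarith
  have hG : 0 < Real.Gamma ((m:ℝ)+μ+1) := Real.Gamma_pos_of_pos (by positivity)
  have hg : 0 < Real.Gamma (μ+1) := Real.Gamma_pos_of_pos (by linarith)
  have hmf : (0:ℝ) < m.factorial := by exact_mod_cast m.factorial_pos
  rw [bterm_eq μ z hz m, abs_div, abs_mul, abs_mul]
  rw [abs_pow, abs_neg, abs_one, one_pow, one_mul,
    abs_of_pos (Real.rpow_pos_of_pos hz2 μ), abs_of_pos (by positivity : (0:ℝ) < ((z/2)^2)^m),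
    abs_of_pos (by positivity : (0:ℝ) < (m.factorial : ℝ) * Real.Gamma ((m:ℝ)+μ+1))]
  rw [div_le_iff₀ (by positivity)]
  have key := Gamma_fact_le μ hμ m
  have expand : ((z/2)^μ / Real.Gamma (μ+1)) * (((z/2)^2)^m / m.factorial) * ((m.factorial:ℝ) * Real.Gamma ((m:ℝ)+μ+1))
      = (z/2)^μ * ((z/2)^2)^m * (Real.Gamma ((m:ℝ)+μ+1) / Real.Gamma (μ+1)) := by
    field_simp; try ring
  rw [expand]
  have h1 : (1:ℝ) ≤ Real.Gamma ((m:ℝ)+μ+1) / Real.Gamma (μ+1) := by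
    rw [le_div_iff₀ hg]
    calc (1:ℝ) * Real.Gamma (μ+1) = Real.Gamma (μ+1) * 1 := by ring
      _ ≤ Real.Gamma (μ+1) * m.factorial := by
          apply mul_le_mul_of_nonneg_left _ hg.le
          exact_mod_cast Nat.one_le_iff_ne_zero.2 m.factorial_ne_zero
      _ ≤ _ := key
  exact le_mul_of_one_le_right (by positivity) h1

lemma bterm_summable_abs (μ z : ℝ) (hz : 0 < z) (hμ : 0 < μ) :
    Summable (fun m => |bterm μ z m|) := by
  apply Summable.of_nonneg_of_le (fun m => abs_nonneg _) (bterm_abs_le μ z hz hμ)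
  exact (Real.summable_pow_div_factorial ((z/2)^2)).mul_left _

lemma bterm_summable (μ z : ℝ) (hz : 0 < z) (hμ : 0 < μ) : Summable (bterm μ z) :=
  (bterm_summable_abs μ z hz hμ).of_abs

lemma besselJ_recurrence (μ z : ℝ) (hμ : 1 < μ) (hz : 0 < z) :
    besselJ (μ-1) z + besselJ (μ+1) z = (2*μ/z) * besselJ μ z := by
  have hz2 : (0:ℝ) < z/2 := by linarith
  have hg : Summable (bterm (μ-1) z) := bterm_summable _ z hz (by linarith)
  have hh : Summable (bterm (μ+1) z) := bterm_summable _ z hz (by linarith)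
  have hf : Summable (bterm μ z) := bterm_summable _ z hz (by linarith)
  have hg1 : Summable (fun m => bterm (μ-1) z (m+1)) := (summable_nat_add_iff 1).2 hg
  have hf1 : Summable (fun m => bterm μ z (m+1)) := (summable_nat_add_iff 1).2 hf
  -- pointwise identity
  have key : ∀ m : ℕ, bterm (μ-1) z (m+1) + bterm (μ+1) z m = (2*μ/z) * bterm μ z (m+1) := by
    intro m
    have hGpos : 0 < Real.Gamma ((m:ℝ)+μ+1) := Real.Gamma_pos_of_pos (by positivity)
    have hGne : Real.Gamma ((m:ℝ)+μ+1) ≠ 0 := ne_of_gt hGpos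
    have e1 : Real.Gamma (((m+1:ℕ):ℝ)+(μ-1)+1) = Real.Gamma ((m:ℝ)+μ+1) := by
      norm_num
    have e2 : Real.Gamma ((m:ℝ)+(μ+1)+1) = ((m:ℝ)+μ+1) * Real.Gamma ((m:ℝ)+μ+1) := by
      rw [show (m:ℝ)+(μ+1)+1 = ((m:ℝ)+μ+1)+1 by ring, Real.Gamma_add_one (by positivity)]
    have e3 : Real.Gamma (((m+1:ℕ):ℝ)+μ+1) = ((m:ℝ)+μ+1) * Real.Gamma ((m:ℝ)+μ+1) := by
      rw [show ((m+1:ℕ):ℝ)+μ+1 = ((m:ℝ)+μ+1)+1 by push_cast; ring,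
        Real.Gamma_add_one (by positivity)]
    have e4 : ((z/2):ℝ) ^ (μ+1) = (z/2)^μ * (z/2) := by
      rw [Real.rpow_add hz2, Real.rpow_one]
    have e5 : ((z/2):ℝ) ^ (μ-1) * (z/2) = (z/2)^μ := by
      have h := Real.rpow_add hz2 (μ-1) 1
      rw [Real.rpow_one] at h
      rw [← h]
      norm_num
    rw [bterm_eq _ z hz, bterm_eq _ z hz, bterm_eq _ z hz, e1, e2, e3]
    rw [Nat.factorial_succ]
    have hF : ((m.factorial:ℝ)) ≠ 0 := by exact_mod_cast m.factorial_ne_zero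
    have hm1 : ((m:ℝ)+1) ≠ 0 := by positivity
    have hmμ : ((m:ℝ)+μ+1) ≠ 0 := by positivity
    have hzne : z ≠ 0 := ne_of_gt hz
    rw [pow_succ ((-1:ℝ)) m, pow_succ (((z/2):ℝ)^2) m, e4]
    push_cast
    field_simp
    rw [← e5]
    ring
  -- combine sums
  rw [besselJ_eq_s7, besselJ_eq_s7, besselJ_eq_s7, ← tsum_mul_left]
  rw [Summable.tsum_eq_zero_add hg, Summable.tsum_eq_zero_add (hf.mul_left (2*μ/z))]
  have e0 : bterm (μ-1) z 0 = (2*μ/z) * bterm μ z 0 := by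
    have hGμ : Real.Gamma μ ≠ 0 := ne_of_gt (Real.Gamma_pos_of_pos (by linarith))
    have e6 : Real.Gamma (((0:ℕ):ℝ)+μ+1) = μ * Real.Gamma μ := by
      norm_num
      rw [Real.Gamma_add_one (by linarith : μ ≠ 0)]
    have e7 : Real.Gamma (((0:ℕ):ℝ)+(μ-1)+1) = Real.Gamma μ := by norm_num
    rw [bterm_eq _ z hz, bterm_eq _ z hz, e6, e7]
    have e5 : ((z/2):ℝ) ^ (μ-1) * (z/2) = (z/2)^μ := by
      have h := Real.rpow_add hz2 (μ-1) 1
      rw [Real.rpow_one] at h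
      rw [← h]
      norm_num
    field_simp
    rw [← e5]
    ring
  rw [add_assoc, e0]
  congr 1
  rw [← Summable.tsum_add hg1 hh]
  exact tsum_congr key

set_option maxHeartbeats 800000 in
lemma besselJ_bounds (μ z : ℝ) (hz : 0 < z) (hμ : 0 < μ) (h4 : (z/2)^2 * 4 ≤ μ + 1) :
    (2/3) * ((z/2)^μ / Real.Gamma (μ+1)) ≤ besselJ μ z ∧
    besselJ μ z ≤ (4/3) * ((z/2)^μ / Real.Gamma (μ+1)) := by
  have hz2 : (0:ℝ) < z/2 := by linarith
  have hg : 0 < Real.Gamma (μ+1) := Real.Gamma_pos_of_pos (by linarith)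
  set T : ℝ := (z/2)^μ / Real.Gamma (μ+1) with hT
  have hTpos : 0 < T := by positivity
  have hb0 : bterm μ z 0 = T := by
    rw [bterm_eq μ z hz 0]
    norm_num [hT]
  -- tail bound
  have tail : ∀ m : ℕ, |bterm μ z m| ≤ T * (1/4)^m := by
    intro m
    have hG : 0 < Real.Gamma ((m:ℝ)+μ+1) := Real.Gamma_pos_of_pos (by positivity)
    have hF : (1:ℝ) ≤ m.factorial := by exact_mod_cast Nat.one_le_iff_ne_zero.2 m.factorial_ne_zero
    have habs : |bterm μ z m| = (z/2)^μ * ((z/2)^2)^m / (m.factorial * Real.Gamma ((m:ℝ)+μ+1)) := by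
      rw [bterm_eq μ z hz m, abs_div, abs_mul, abs_mul, abs_pow, abs_neg, abs_one, one_pow, one_mul,
        abs_of_pos (Real.rpow_pos_of_pos hz2 μ), abs_of_pos (by positivity : (0:ℝ) < ((z/2)^2)^m),
        abs_of_pos (by positivity : (0:ℝ) < (m.factorial : ℝ) * Real.Gamma ((m:ℝ)+μ+1))]
    rw [habs]
    rw [div_le_iff₀ (by positivity)]
    have key := Gamma_geom_le μ hμ m
    have h1 : ((z/2)^2)^m * Real.Gamma (μ+1) ≤ ((μ+1)/4)^m * Real.Gamma (μ+1) := by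
      apply mul_le_mul_of_nonneg_right _ hg.le
      apply pow_le_pow_left₀ (by positivity) (by linarith)
    calc (z/2)^μ * ((z/2)^2)^m = T * (((z/2)^2)^m * Real.Gamma (μ+1)) := by
          rw [hT]; field_simp; try ring
      _ ≤ T * (((μ+1)/4)^m * Real.Gamma (μ+1)) := by
          apply mul_le_mul_of_nonneg_left h1 hTpos.le
      _ = T * (1/4)^m * (Real.Gamma (μ+1) * (μ+1)^m) := by
          rw [show (μ+1)/4 = (μ+1)*(1/4) by ring, mul_pow]; ring
      _ ≤ T * (1/4)^m * Real.Gamma ((m:ℝ)+μ+1) := by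
          apply mul_le_mul_of_nonneg_left key (by positivity)
      _ ≤ T * (1/4)^m * ((m.factorial:ℝ) * Real.Gamma ((m:ℝ)+μ+1)) := by
          apply mul_le_mul_of_nonneg_left _ (by positivity)
          nlinarith
  have hsum : Summable (bterm μ z) := bterm_summable μ z hz hμ
  have hsum1 : Summable (fun m => bterm μ z (m+1)) := (summable_nat_add_iff 1).2 hsum
  have hsumabs1 : Summable (fun m => |bterm μ z (m+1)|) :=
    (summable_nat_add_iff 1).2 (bterm_summable_abs μ z hz hμ)
  have hgeo : Summable (fun m : ℕ => T * (1/4)^(m+1)) := by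
    apply Summable.mul_left
    exact (summable_geometric_of_lt_one (by norm_num) (by norm_num)).comp_injective
      (add_left_injective 1)
  have tsum_geo : ∑' m : ℕ, T * (1/4)^(m+1) = T/3 := by
    have : ∑' m : ℕ, T * (1/4)^(m+1) = T * ((1/4) * ∑' m : ℕ, ((1/4):ℝ)^m) := by
      rw [← tsum_mul_left, ← tsum_mul_left]
      apply tsum_congr; intro m; ring
    rw [this, tsum_geometric_of_lt_one (by norm_num) (by norm_num)]
    norm_num
    ring
  have habs : |∑' m, bterm μ z (m+1)| ≤ T/3 := by
    have h1 : |∑' m, bterm μ z (m+1)| ≤ ∑' m, |bterm μ z (m+1)| := by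
      have hn : Summable (fun m => ‖bterm μ z (m+1)‖) := by
        simpa [Real.norm_eq_abs] using hsumabs1
      simpa [Real.norm_eq_abs] using norm_tsum_le_tsum_norm hn
    have h2 : ∑' m, |bterm μ z (m+1)| ≤ ∑' m : ℕ, T * (1/4)^(m+1) :=
      Summable.tsum_le_tsum (fun m => tail (m+1)) hsumabs1 hgeo
    rw [tsum_geo] at h2
    linarith
  have hdecomp : besselJ μ z = T + ∑' m, bterm μ z (m+1) := by
    rw [besselJ_eq_s7, Summable.tsum_eq_zero_add hsum, hb0]
  rw [hdecomp]
  cases' abs_le.1 habs with hlo hhi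
  constructor <;> linarith

noncomputable def Jb (l : ℝ) (k : ℕ) : ℝ := besselJ (2/l + k) (2/l)

lemma Jb_rec (l : ℝ) (hl : 0 < l) (k : ℕ) :
    Jb l k + Jb l (k+2) = (l*((k:ℝ)+1)+2) * Jb l (k+1) := by
  have hc : (0:ℝ) < 2/l := by positivity
  have h := besselJ_recurrence (2/l + ((k:ℝ)+1)) (2/l) (by linarith [Nat.cast_nonneg (α := ℝ) k]) hc
  rw [show 2/l + ((k:ℝ)+1) - 1 = 2/l + (k:ℝ) by ring,
      show 2/l + ((k:ℝ)+1) + 1 = 2/l + (((k+2:ℕ)):ℝ) by push_cast; ring] at h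
  have hco : 2*(2/l + ((k:ℝ)+1))/(2/l) = l*((k:ℝ)+1)+2 := by
    field_simp
    ring
  rw [hco] at h
  unfold Jb
  push_cast
  convert h using 3 <;> push_cast <;> ring

lemma Jb_pos_mono (l : ℝ) (hl : 0 < l) : ∀ k : ℕ, 0 < Jb l (k+1) ∧ Jb l (k+1) ≤ Jb l k := by
  have hc : (0:ℝ) < 2/l := by positivity
  have hc2 : (0:ℝ) < 1/l := by positivity
  -- direct estimate for large k
  obtain ⟨N, hN⟩ := exists_nat_ge ((1/l)^2*4)
  have direct : ∀ k : ℕ, N ≤ k → 0 < Jb l (k+1) ∧ Jb l (k+1) ≤ Jb l k := by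
    intro k hk
    have hkR : ((1:ℝ)/l)^2*4 ≤ (k:ℝ) := le_trans hN (by exact_mod_cast hk)
    have harg : (2/l)/2 = 1/l := by ring
    have hb : ∀ j : ℕ, (k:ℕ) ≤ j → (2/3) * ((1/l)^(2/l + (j:ℝ)) / Real.Gamma ((2/l + j)+1)) ≤ Jb l j ∧
        Jb l j ≤ (4/3) * ((1/l)^(2/l + (j:ℝ)) / Real.Gamma ((2/l + j)+1)) := by
      intro j hj
      have hjR : (k:ℝ) ≤ j := by exact_mod_cast hj
      have h4 : ((2/l)/2)^2 * 4 ≤ (2/l + j) + 1 := by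
        rw [harg]; linarith
      have := besselJ_bounds (2/l + j) (2/l) hc (by positivity) h4
      rw [harg] at this
      exact this
    obtain ⟨hlo, _⟩ := hb k le_rfl
    obtain ⟨hlo1, hhi1⟩ := hb (k+1) (Nat.le_succ k)
    have hT : (0:ℝ) < (1/l)^(2/l + (k:ℝ)) / Real.Gamma ((2/l + k)+1) :=
      div_pos (Real.rpow_pos_of_pos hc2 _) (Real.Gamma_pos_of_pos (by positivity))
    constructor
    · exact lt_of_lt_of_le (by positivity) hlo1
    · -- T_{k+1} ≤ T_k / 2
      have hGam : Real.Gamma ((2/l + ((k:ℝ)+1))+1) = ((2/l + k)+1) * Real.Gamma ((2/l + k)+1) := by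
        rw [show (2/l + ((k:ℝ)+1))+1 = ((2/l + (k:ℝ))+1)+1 by ring,
          Real.Gamma_add_one (by positivity)]
      have hrp : ((1:ℝ)/l)^(2/l + ((k:ℝ)+1)) = (1/l)^(2/l + (k:ℝ)) * (1/l) := by
        rw [show 2/l + ((k:ℝ)+1) = (2/l + (k:ℝ)) + 1 by ring, Real.rpow_add hc2, Real.rpow_one]
      have hTT : (4/3) * ((1/l)^(2/l + ((k:ℝ)+1)) / Real.Gamma ((2/l + ((k:ℝ)+1))+1))
          ≤ (2/3) * ((1/l)^(2/l + (k:ℝ)) / Real.Gamma ((2/l + k)+1)) := by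
        rw [hGam, hrp]
        have hkey : (4/3) * ((1/l)^(2/l + (k:ℝ)) * (1/l)) ≤ (2/3) * ((1/l)^(2/l + (k:ℝ)) * ((2/l + (k:ℝ))+1)) := by
          have h1 : (2:ℝ)*(1/l) ≤ (2/l + (k:ℝ))+1 := by
            have : (0:ℝ) ≤ (k:ℝ) := Nat.cast_nonneg k
            rw [show (2:ℝ)*(1/l) = 2/l by ring]
            linarith
          nlinarith [Real.rpow_pos_of_pos hc2 (2/l + (k:ℝ))]
        have hGpos : 0 < Real.Gamma ((2/l + (k:ℝ))+1) := Real.Gamma_pos_of_pos (by positivity)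
        have hApos : (0:ℝ) < 2/l + (k:ℝ) + 1 := by positivity
        calc 4/3 * ((1/l)^(2/l + (k:ℝ)) * (1/l) / ((2/l + (k:ℝ) + 1) * Real.Gamma ((2/l + (k:ℝ))+1)))
            = (4/3 * ((1/l)^(2/l + (k:ℝ)) * (1/l))) / ((2/l + (k:ℝ) + 1) * Real.Gamma ((2/l + (k:ℝ))+1)) := by
              ring
          _ ≤ (2/3 * ((1/l)^(2/l + (k:ℝ)) * ((2/l + (k:ℝ))+1))) / ((2/l + (k:ℝ) + 1) * Real.Gamma ((2/l + (k:ℝ))+1)) := by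
              gcongr
          _ = 2/3 * ((1/l)^(2/l + (k:ℝ)) / Real.Gamma ((2/l + (k:ℝ))+1)) := by
              field_simp
              try ring
      have hcast : ((k+1:ℕ):ℝ) = (k:ℝ)+1 := by push_cast; ring
      rw [hcast] at hlo1 hhi1
      linarith
  -- downward step
  have hdown : ∀ k : ℕ, (0 < Jb l (k+2) ∧ Jb l (k+2) ≤ Jb l (k+1)) →
      (0 < Jb l (k+1) ∧ Jb l (k+1) ≤ Jb l k) := by
    intro k ⟨h1, h2⟩
    have hrec := Jb_rec l hl k
    have hk0 : (0:ℝ) ≤ (k:ℝ) := Nat.cast_nonneg k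
    have hJ1 : 0 < Jb l (k+1) := lt_of_lt_of_le h1 h2
    constructor
    · exact hJ1
    · nlinarith [mul_nonneg (mul_nonneg hl.le (by linarith : (0:ℝ) ≤ (k:ℝ)+1)) hJ1.le]
  -- combine
  have main : ∀ d k : ℕ, N ≤ k + d → 0 < Jb l (k+1) ∧ Jb l (k+1) ≤ Jb l k := by
    intro d
    induction d with
    | zero => intro k h; exact direct k (by omega)
    | succ d ih =>
      intro k h
      by_cases h' : N ≤ k
      · exact direct k h'
      · exact hdown k (ih (k+1) (by omega))
  intro k
  exact main N k (by omega)

lemma Jb_pos (l : ℝ) (hl : 0 < l) (k : ℕ) : 0 < Jb l k := by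
  cases k with
  | zero =>
    obtain ⟨h1, h2⟩ := Jb_pos_mono l hl 0
    linarith
  | succ k => exact (Jb_pos_mono l hl k).1

lemma Jb_decay (l : ℝ) (hl : 0 < l) (k : ℕ) : (1+l) * Jb l (k+1) ≤ Jb l k := by
  have hrec := Jb_rec l hl k
  have h1 := (Jb_pos_mono l hl (k+1)).2
  have h2 := Jb_pos l hl (k+2)
  have h3 := Jb_pos l hl (k+1)
  have hk0 : (0:ℝ) ≤ (k:ℝ) := Nat.cast_nonneg k
  nlinarith [mul_nonneg (mul_nonneg hl.le hk0) h3.le]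

lemma Jb_le (l : ℝ) (hl : 0 < l) (k : ℕ) : Jb l k ≤ Jb l 0 * ((1+l)⁻¹)^k := by
  induction k with
  | zero => simp
  | succ k ih =>
    have hd := Jb_decay l hl k
    have h1 : (0:ℝ) < 1+l := by linarith
    have h2 : Jb l (k+1) ≤ Jb l k / (1+l) := by
      rw [le_div_iff₀ h1]; linarith
    calc Jb l (k+1) ≤ Jb l k / (1+l) := h2
      _ ≤ (Jb l 0 * ((1+l)⁻¹)^k) / (1+l) := by
          gcongr
      _ = Jb l 0 * ((1+l)⁻¹)^(k+1) := by
          rw [pow_succ]; field_simp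
  
lemma Jb_tendsto (l : ℝ) (hl : 0 < l) :
    Filter.Tendsto (fun k : ℕ => Jb l k) Filter.atTop (nhds 0) := by
  have h1 : (0:ℝ) < 1+l := by linarith
  have hr0 : (0:ℝ) ≤ (1+l)⁻¹ := by positivity
  have hr1 : ((1+l):ℝ)⁻¹ < 1 := by
    rw [inv_lt_one_iff₀]; right; linarith
  have hgeo : Filter.Tendsto (fun k : ℕ => Jb l 0 * ((1+l)⁻¹)^k) Filter.atTop (nhds 0) := by
    have := tendsto_pow_atTop_nhds_zero_of_lt_one hr0 hr1
    simpa using this.const_mul (Jb l 0)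
  apply squeeze_zero (fun k => (Jb_pos l hl k).le) (fun k => Jb_le l hl k) hgeo

set_option maxHeartbeats 2000000 in
/-- For `λ > 0`, with `a_n`, `b_n` as in the ladder recursion,
`D = (2λ²+8λ+5) J_{2+2/λ}(2/λ) − (λ+3) J_{3+2/λ}(2/λ)` is nonzero and
`b_n / a_n` converges to `((2λ²+4λ+1) J_{2+2/λ}(2/λ) − (λ+1) J_{3+2/λ}(2/λ)) / D`. -/
theorem stmt_7 (l : ℝ) (hl : 0 < l)
    (a b : ℕ → ℝ)
    (ha0 : a 0 = 1) (ha1 : a 1 = 2 + l) (ha2 : a 2 = 2 * l ^ 2 + 7 * l + 2)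
    (ha3 : a 3 = 6 * l ^ 3 + 26 * l ^ 2 + 22 * l + 2)
    (hb0 : b 0 = 0) (hb1 : b 1 = l) (hb2 : b 2 = 2 * l ^ 2 + 3 * l)
    (hb3 : b 3 = 6 * l ^ 3 + 14 * l ^ 2 + 6 * l)
    (harec : ∀ n : ℕ, 4 ≤ n →
      a n = (l * (n : ℝ) + 3) * a (n - 1) - (l * ((n : ℝ) - 2) + 3) * a (n - 2)
            + a (n - 3))
    (hbrec : ∀ n : ℕ, 4 ≤ n →
      b n = (l * (n : ℝ) + 3) * b (n - 1) - (l * ((n : ℝ) - 2) + 3) * b (n - 2)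
            + b (n - 3)) :
    (2 * l ^ 2 + 8 * l + 5) * besselJ (2 + 2 / l) (2 / l)
        - (l + 3) * besselJ (3 + 2 / l) (2 / l) ≠ 0 ∧
    Filter.Tendsto (fun n : ℕ => b n / a n) Filter.atTop
      (nhds (((2 * l ^ 2 + 4 * l + 1) * besselJ (2 + 2 / l) (2 / l)
                - (l + 1) * besselJ (3 + 2 / l) (2 / l)) /
             ((2 * l ^ 2 + 8 * l + 5) * besselJ (2 + 2 / l) (2 / l)
                - (l + 3) * besselJ (3 + 2 / l) (2 / l)))) := by
  set J : ℕ → ℝ := Jb l with hJdef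
  -- besselJ expressions are J 2 and J 3
  have hJ2 : besselJ (2 + 2 / l) (2 / l) = J 2 := by
    rw [hJdef]; unfold Jb; norm_num; ring_nf
  have hJ3 : besselJ (3 + 2 / l) (2 / l) = J 3 := by
    rw [hJdef]; unfold Jb; norm_num; ring_nf
  have rec0 := Jb_rec l hl 0
  have rec1 := Jb_rec l hl 1
  have rec2 := Jb_rec l hl 2
  rw [← hJdef] at rec0 rec1 rec2
  norm_num at rec0 rec1 rec2
  -- D and N identities
  have hD : (2 * l ^ 2 + 8 * l + 5) * besselJ (2 + 2 / l) (2 / l)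
        - (l + 3) * besselJ (3 + 2 / l) (2 / l) = J 0 + J 1 := by
    rw [hJ2, hJ3]
    linear_combination (2*l^2+8*l+5 - (l+3)*(2*l+2)) * rec0 - (l+3) * rec1
  have hN : (2 * l ^ 2 + 4 * l + 1) * besselJ (2 + 2 / l) (2 / l)
        - (l + 1) * besselJ (3 + 2 / l) (2 / l) = J 0 - J 1 := by
    rw [hJ2, hJ3]
    linear_combination (2*l^2+4*l+1 - (l+1)*(2*l+2)) * rec0 - (l+1) * rec1
  have hJ0pos := Jb_pos l hl 0
  have hJ1pos := Jb_pos l hl 1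
  have hDpos : 0 < J 0 + J 1 := by
    rw [hJdef]; positivity
  constructor
  · rw [hD]; exact ne_of_gt hDpos
  -- key identity
  have key : ∀ n : ℕ, (J 0 - J 1) * a (n+1) - (J 0 + J 1) * b (n+1) = 2*(J (n+1) - J (n+2)) := by
    have triple : ∀ n : ℕ,
        ((J 0 - J 1) * a (n+1) - (J 0 + J 1) * b (n+1) = 2*(J (n+1) - J (n+2))) ∧
        ((J 0 - J 1) * a (n+2) - (J 0 + J 1) * b (n+2) = 2*(J (n+2) - J (n+3))) ∧
        ((J 0 - J 1) * a (n+3) - (J 0 + J 1) * b (n+3) = 2*(J (n+3) - J (n+4))) := by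
      intro n
      induction n with
      | zero =>
        refine ⟨?_, ?_, ?_⟩
        · rw [ha1, hb1]
          linear_combination 2 * rec0
        · rw [ha2, hb2]
          linear_combination (4*l+2) * rec0 + 2 * rec1
        · rw [ha3, hb3]
          linear_combination (12*l^2+16*l+2) * rec0 + (6*l+2) * rec1 + 2 * rec2
      | succ n ih =>
        obtain ⟨ih1, ih2, ih3⟩ := ih
        refine ⟨ih2, ih3, ?_⟩
        simp only [show n+1+1=n+2 from rfl, show n+1+2=n+3 from rfl,
          show n+1+3=n+4 from rfl, show n+1+4=n+5 from rfl]
        have ha' : a (n+4) = (l*((n:ℝ)+4)+3) * a (n+3) - (l*((n:ℝ)+2)+3) * a (n+2) + a (n+1) := by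
          have h := harec (n+4) (by omega)
          norm_num at h
          push_cast at h
          convert h using 2 <;> ring_nf
        have hb' : b (n+4) = (l*((n:ℝ)+4)+3) * b (n+3) - (l*((n:ℝ)+2)+3) * b (n+2) + b (n+1) := by
          have h := hbrec (n+4) (by omega)
          norm_num at h
          push_cast at h
          convert h using 2 <;> ring_nf
        have r1 := Jb_rec l hl (n+1)
        have r2 := Jb_rec l hl (n+2)
        have r3 := Jb_rec l hl (n+3)
        rw [← hJdef] at r1 r2 r3
        push_cast at r1 r2 r3
        simp only [show n+1+2=n+3 from rfl, show n+2+2=n+4 from rfl, show n+3+2=n+5 from rfl,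
          show n+1+1=n+2 from rfl, show n+2+1=n+3 from rfl, show n+3+1=n+4 from rfl] at r1 r2 r3
        have hF : 2*(J (n+4) - J (n+5)) = (l*((n:ℝ)+4)+3) * (2*(J (n+3) - J (n+4)))
            - (l*((n:ℝ)+2)+3) * (2*(J (n+2) - J (n+3))) + 2*(J (n+1) - J (n+2)) := by
          linear_combination (-2) * r1 + 4 * r2 + (-2) * r3
        rw [ha', hb']
        linear_combination (l*((n:ℝ)+4)+3) * ih3 - (l*((n:ℝ)+2)+3) * ih2 + ih1 - hF
    intro n
    exact (triple n).1
  -- positivity and growth of a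
  have inv : ∀ m : ℕ, 0 < a (m+1) ∧ 0 < a (m+2) - a (m+1) ∧
      a (m+2) - a (m+1) ≤ a (m+3) - a (m+2) := by
    intro m
    induction m with
    | zero =>
      rw [ha1, ha2, ha3]
      refine ⟨by linarith, by nlinarith, by nlinarith⟩
    | succ m ih =>
      obtain ⟨h1, h2, h3⟩ := ih
      simp only [show m+1+1=m+2 from rfl, show m+1+2=m+3 from rfl, show m+1+3=m+4 from rfl]
      have ha' : a (m+4) = (l*((m:ℝ)+4)+3) * a (m+3) - (l*((m:ℝ)+2)+3) * a (m+2) + a (m+1) := by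
        have h := harec (m+4) (by omega)
        norm_num at h
        push_cast at h
        convert h using 2 <;> ring_nf
      have hm0 : (0:ℝ) ≤ (m:ℝ) := Nat.cast_nonneg m
      have ha2pos : 0 < a (m+2) := by linarith
      refine ⟨by linarith, by linarith, ?_⟩
      nlinarith [mul_nonneg (mul_nonneg hl.le (by linarith : (0:ℝ) ≤ (m:ℝ)+4))
          (by linarith : (0:ℝ) ≤ a (m+3) - a (m+2)),
        mul_nonneg hl.le ha2pos.le]
  have apos : ∀ n : ℕ, 0 < a n := by
    intro n
    cases n with
    | zero => rw [ha0]; norm_num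
    | succ n => exact (inv n).1
  have dlow : ∀ m : ℕ, 2*l^2+6*l ≤ a (m+2) - a (m+1) := by
    intro m
    induction m with
    | zero => rw [ha1, ha2]; nlinarith
    | succ m ih =>
      have := (inv m).2.2
      simp only [show m+1+1=m+2 from rfl, show m+1+2=m+3 from rfl]
      linarith
  have grow : ∀ m : ℕ, (2+l) + m*(2*l^2+6*l) ≤ a (m+1) := by
    intro m
    induction m with
    | zero => rw [ha1]; norm_num
    | succ m ih =>
      have := dlow m
      push_cast
      simp only [show m+1+1=m+2 from rfl]
      linarith
  have atend : Filter.Tendsto a Filter.atTop Filter.atTop := by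
    have hlin : Filter.Tendsto (fun m : ℕ => (2+l) + (m:ℝ)*(2*l^2+6*l)) Filter.atTop Filter.atTop := by
      apply Filter.tendsto_atTop_add_const_left
      exact tendsto_natCast_atTop_atTop.atTop_mul_const (by nlinarith)
    have h1 : Filter.Tendsto (fun m : ℕ => a (m+1)) Filter.atTop Filter.atTop :=
      Filter.tendsto_atTop_mono grow hlin
    exact (Filter.tendsto_add_atTop_iff_nat 1).1 h1
  -- limit computation
  rw [hN, hD]
  have hcne : (J 0 + J 1) ≠ 0 := ne_of_gt hDpos
  have hJtend : Filter.Tendsto (fun n : ℕ => J n) Filter.atTop (nhds 0) := by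
    rw [hJdef]; exact Jb_tendsto l hl
  have hJtend1 : Filter.Tendsto (fun n : ℕ => J (n+1)) Filter.atTop (nhds 0) :=
    hJtend.comp (Filter.tendsto_add_atTop_nat 1)
  have hFn : Filter.Tendsto (fun n : ℕ => 2*(J n - J (n+1))) Filter.atTop (nhds 0) := by
    have := (hJtend.sub hJtend1).const_mul (2:ℝ)
    simpa using this
  have hinv : Filter.Tendsto (fun n : ℕ => ((J 0 + J 1) * a n)⁻¹) Filter.atTop (nhds 0) := by
    apply Filter.Tendsto.inv_tendsto_atTop
    exact Filter.Tendsto.const_mul_atTop hDpos atend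
  have hprod : Filter.Tendsto (fun n : ℕ => 2*(J n - J (n+1)) / ((J 0 + J 1) * a n))
      Filter.atTop (nhds 0) := by
    have := hFn.mul hinv
    simpa [div_eq_mul_inv] using this
  have main : Filter.Tendsto
      (fun n : ℕ => (J 0 - J 1)/(J 0 + J 1) - 2*(J n - J (n+1)) / ((J 0 + J 1) * a n))
      Filter.atTop (nhds ((J 0 - J 1)/(J 0 + J 1))) := by
    have := (tendsto_const_nhds (x := (J 0 - J 1)/(J 0 + J 1)) (f := Filter.atTop (α := ℕ))).sub hprod
    simpa using this
  apply main.congr'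
  rw [Filter.eventuallyEq_iff_exists_mem]
  refine ⟨{n | 1 ≤ n}, Filter.mem_atTop 1, ?_⟩
  intro n hn
  have hn' : 1 ≤ n := hn
  obtain ⟨m, rfl⟩ : ∃ m, n = m + 1 := ⟨n - 1, by omega⟩
  have h := key m
  have han : a (m+1) ≠ 0 := ne_of_gt (apos (m+1))
  show (J 0 - J 1)/(J 0 + J 1) - 2*(J (m+1) - J (m+1+1)) / ((J 0 + J 1) * a (m+1)) = b (m+1) / a (m+1)
  simp only [show m+1+1=m+2 from rfl]
  field_simp
  linear_combination h
end

section
/- Let γ̂ > −1 be real, α ≠ 0 real, and n ∈ ℕ. Define I(n) = ∫_0^1 (1−x)^{γ̂+n}·x·e^{αx} dx and J(0) = ∫_0^1 (1−x)^{γ̂}·e^{αx} dx. Then I(n) = (Γ(γ̂+n+1)/α^n)·[ (I(0) − (n/α)·J(0))/Γ(γ̂+1) + (1/α²)·∑_{m=1}^n ((n+1−m)·α^m)/Γ(γ̂+1+m) ]. -/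
open intervalIntegral MeasureTheory

private lemma aux_int {r : ℝ} (hr : -1 < r) {g : ℝ → ℝ} (hg : Continuous g) :
    IntervalIntegrable (fun x => (1 - x) ^ r * g x) volume 0 1 := by
  have h1 : IntervalIntegrable (fun x : ℝ => (1 - x) ^ r) volume 0 1 := by
    have := (intervalIntegral.intervalIntegrable_rpow' (a := 0) (b := 1) hr).comp_sub_left 1
    simpa using this.symm
  exact h1.mul_continuousOn hg.continuousOn

private lemma aux_ibp {p : ℝ} (hp : 0 < p) {f f' : ℝ → ℝ}
    (hf : ∀ x, HasDerivAt f (f' x) x) (hf'c : Continuous f') :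
    ∫ x in (0:ℝ)..1, (1 - x) ^ (p - 1) * f x
      = f 0 / p + (1 / p) * ∫ x in (0:ℝ)..1, (1 - x) ^ p * f' x := by
  have hfc : Continuous f := by
    rw [continuous_iff_continuousAt]; exact fun x => (hf x).continuousAt
  set G : ℝ → ℝ := fun x => -((1 - x) ^ p / p * f x) with hG
  set G' : ℝ → ℝ := fun x => (1 - x) ^ (p - 1) * f x - (1 - x) ^ p * (f' x / p) with hG'
  have hderiv : ∀ x ∈ Set.Ioo (0:ℝ) 1, HasDerivAt G (G' x) x := by
    intro x hx
    have h1x : (0:ℝ) < 1 - x := by simp [hx.2]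
    have hd1 : HasDerivAt (fun y : ℝ => (1 - y) ^ p) (-1 * p * (1 - x) ^ (p - 1)) x :=
      ((hasDerivAt_id x).const_sub 1).rpow_const (Or.inl h1x.ne')
    have h2 := ((hd1.div_const p).fun_mul (hf x)).fun_neg
    convert h2 using 1 <;> try rfl
    simp only [hG']
    field_simp
    ring
  have hcont : ContinuousOn G (Set.Icc 0 1) := by
    apply Continuous.continuousOn
    exact (((continuous_const.sub continuous_id).rpow_const
      (fun x => Or.inr hp.le)).div_const p |>.mul hfc).neg
  have hint1 : IntervalIntegrable (fun x => (1 - x) ^ (p - 1) * f x) volume 0 1 :=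
    aux_int (by linarith) hfc
  have hint2 : IntervalIntegrable (fun x => (1 - x) ^ p * (f' x / p)) volume 0 1 :=
    aux_int (by linarith) (hf'c.div_const p)
  have hint : IntervalIntegrable G' volume 0 1 := hint1.sub hint2
  have hftc := intervalIntegral.integral_eq_sub_of_hasDerivAt_of_le (by norm_num)
    hcont hderiv hint
  have hG10 : G 1 - G 0 = f 0 / p := by
    simp [hG, Real.zero_rpow hp.ne', Real.one_rpow]
    ring
  rw [hG10] at hftc
  have hsplit : ∫ x in (0:ℝ)..1, G' x
      = (∫ x in (0:ℝ)..1, (1 - x) ^ (p - 1) * f x)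
        - ∫ x in (0:ℝ)..1, (1 - x) ^ p * (f' x / p) :=
    intervalIntegral.integral_sub hint1 hint2
  have hdiv : ∫ x in (0:ℝ)..1, (1 - x) ^ p * (f' x / p)
      = (1 / p) * ∫ x in (0:ℝ)..1, (1 - x) ^ p * f' x := by
    rw [← intervalIntegral.integral_const_mul]
    apply intervalIntegral.integral_congr
    intro x _
    field_simp
  rw [hsplit, hdiv] at hftc
  linarith [hftc]

/-- For `γ̂ > −1`, `α ≠ 0` and `n ∈ ℕ`, with
`I(n) = ∫₀¹ (1−x)^{γ̂+n} x e^{αx} dx` and `J(0) = ∫₀¹ (1−x)^{γ̂} e^{αx} dx`,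
`I(n) = (Γ(γ̂+n+1)/αⁿ)·[(I(0) − (n/α)·J(0))/Γ(γ̂+1)
        + (1/α²)·∑_{m=1}^n (n+1−m)·α^m/Γ(γ̂+1+m)]`. -/
theorem stmt_11 (γ α : ℝ) (hγ : -1 < γ) (hα : α ≠ 0) (n : ℕ)
    (I : ℕ → ℝ)
    (hI : ∀ k : ℕ, I k = ∫ x in (0:ℝ)..1, (1 - x) ^ (γ + (k : ℝ)) * x * Real.exp (α * x))
    (J0 : ℝ) (hJ0 : J0 = ∫ x in (0:ℝ)..1, (1 - x) ^ γ * Real.exp (α * x)) :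
    I n = (Real.Gamma (γ + (n : ℝ) + 1) / α ^ n) *
      ((I 0 - ((n : ℝ) / α) * J0) / Real.Gamma (γ + 1) +
        (1 / α ^ 2) * ∑ m ∈ Finset.Icc 1 n,
          ((n : ℝ) + 1 - (m : ℝ)) * α ^ m / Real.Gamma (γ + 1 + (m : ℝ))) := by
  set J : ℕ → ℝ := fun k => ∫ x in (0:ℝ)..1, (1 - x) ^ (γ + (k : ℝ)) * Real.exp (α * x)
    with hJ
  have hexpc : Continuous (fun x : ℝ => Real.exp (α * x)) :=
    Real.continuous_exp.comp (continuous_const.mul continuous_id)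
  have hexp : ∀ x : ℝ, HasDerivAt (fun y => Real.exp (α * y)) (α * Real.exp (α * x)) x := by
    intro x
    have := ((hasDerivAt_id x).const_mul α).exp
    simpa [mul_comm] using this
  have hxexp : ∀ x : ℝ, HasDerivAt (fun y => y * Real.exp (α * y))
      (Real.exp (α * x) + α * (x * Real.exp (α * x))) x := by
    intro x
    have := (hasDerivAt_id x).fun_mul (hexp x)
    simp only [id_eq, one_mul] at this
    convert this using 1 <;> try rfl
    ring
  have hpos : ∀ k : ℕ, (0:ℝ) < γ + k + 1 := by
    intro k
    have : (0:ℝ) ≤ k := Nat.cast_nonneg k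
    linarith
  have hJcast : ∀ k : ℕ, γ + ((k : ℝ) + 1) = (γ + k + 1) := by intro k; ring
  -- J recurrence
  have hJrec : ∀ k : ℕ, α * J (k + 1) = (γ + k + 1) * J k - 1 := by
    intro k
    have hibp := aux_ibp (hpos k) hexp (continuous_const.mul hexpc)
    have e1 : J k = ∫ x in (0:ℝ)..1, (1 - x) ^ (γ + k + 1 - 1) * Real.exp (α * x) := by
      rw [hJ]
      norm_num
    have e2 : (∫ x in (0:ℝ)..1, (1 - x) ^ (γ + k + 1) * (α * Real.exp (α * x)))
        = α * J (k + 1) := by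
      rw [hJ, ← intervalIntegral.integral_const_mul]
      apply intervalIntegral.integral_congr
      intro x _
      push_cast
      rw [hJcast k]
      ring
    rw [e2] at hibp
    rw [e1, hibp]
    simp only [mul_zero, Real.exp_zero]
    have := (hpos k).ne'
    field_simp
    ring
  -- I recurrence
  have hIrec : ∀ k : ℕ, α * I (k + 1) = (γ + k + 1) * I k - J (k + 1) := by
    intro k
    have hibp := aux_ibp (hpos k) hxexp
      (hexpc.add (continuous_const.mul (continuous_id.mul hexpc)))
    have e1 : I k = ∫ x in (0:ℝ)..1, (1 - x) ^ (γ + k + 1 - 1) * (x * Real.exp (α * x)) := by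
      rw [hI]
      norm_num [mul_assoc]
    have hint1 : IntervalIntegrable
        (fun x => (1 - x) ^ (γ + k + 1) * Real.exp (α * x)) volume 0 1 :=
      aux_int (by linarith [hpos k]) hexpc
    have hint2 : IntervalIntegrable
        (fun x => (1 - x) ^ (γ + k + 1) * (α * (x * Real.exp (α * x)))) volume 0 1 :=
      aux_int (by linarith [hpos k]) (continuous_const.mul (continuous_id.mul hexpc))
    have e2 : (∫ x in (0:ℝ)..1, (1 - x) ^ (γ + k + 1)
          * (Real.exp (α * x) + α * (x * Real.exp (α * x))))
        = J (k + 1) + α * I (k + 1) := by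
      have : (∫ x in (0:ℝ)..1, (1 - x) ^ (γ + k + 1)
            * (Real.exp (α * x) + α * (x * Real.exp (α * x))))
          = (∫ x in (0:ℝ)..1, (1 - x) ^ (γ + k + 1) * Real.exp (α * x))
            + ∫ x in (0:ℝ)..1, (1 - x) ^ (γ + k + 1) * (α * (x * Real.exp (α * x))) := by
        rw [← intervalIntegral.integral_add hint1 hint2]
        apply intervalIntegral.integral_congr
        intro x _
        ring
      rw [this]
      congr 1
      · rw [hJ]
        apply intervalIntegral.integral_congr
        intro x _
        push_cast
        rw [hJcast k]
      · rw [hI, ← intervalIntegral.integral_const_mul]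
        apply intervalIntegral.integral_congr
        intro x _
        push_cast
        rw [hJcast k]
        ring
    rw [e2] at hibp
    rw [← e1] at hibp
    simp only [mul_zero, zero_mul, Real.exp_zero, zero_div, zero_add] at hibp
    have := (hpos k).ne'
    field_simp at hibp
    linarith [hibp]
  -- closed form for J
  have hΓ1 : Real.Gamma (γ + 1) ≠ 0 := (Real.Gamma_pos_of_pos (by linarith)).ne'
  have hΓk : ∀ k : ℕ, Real.Gamma (γ + k + 1) ≠ 0 :=
    fun k => (Real.Gamma_pos_of_pos (hpos k)).ne'
  have hΓsucc : ∀ k : ℕ, Real.Gamma (γ + ((k : ℝ) + 1) + 1)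
      = (γ + k + 1) * Real.Gamma (γ + k + 1) := by
    intro k
    rw [show γ + ((k : ℝ) + 1) + 1 = (γ + k + 1) + 1 by ring,
      Real.Gamma_add_one (hpos k).ne']
  have hΓ11 : ∀ k : ℕ, Real.Gamma (γ + 1 + ((k : ℝ) + 1))
      = (γ + k + 1) * Real.Gamma (γ + k + 1) := by
    intro k
    rw [show γ + 1 + ((k : ℝ) + 1) = (γ + k + 1) + 1 by ring,
      Real.Gamma_add_one (hpos k).ne']
  have hJf : ∀ k : ℕ, J k = Real.Gamma (γ + k + 1) / α ^ k *
      (J 0 / Real.Gamma (γ + 1)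
        - (1 / α) * ∑ m ∈ Finset.Icc 1 k, α ^ m / Real.Gamma (γ + 1 + (m : ℝ))) := by
    intro k
    induction k with
    | zero =>
      simp
      field_simp
    | succ k ih =>
      have hrec := hJrec k
      have hJk1 : J (k + 1) = ((γ + k + 1) * J k - 1) / α := by
        field_simp [← hrec]
        linarith [hrec]
      have hsum : ∑ m ∈ Finset.Icc 1 (k + 1), α ^ m / Real.Gamma (γ + 1 + (m : ℝ))
          = (∑ m ∈ Finset.Icc 1 k, α ^ m / Real.Gamma (γ + 1 + (m : ℝ)))
            + α ^ (k + 1) / Real.Gamma (γ + 1 + ((k : ℝ) + 1)) := by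
        rw [Finset.sum_Icc_succ_top (by omega)]
        push_cast
        ring_nf
      rw [hJk1, ih]
      push_cast
      rw [hΓsucc k, hsum, hΓ11 k]
      have h1 := hΓk k
      have h2 := (hpos k).ne'
      field_simp
      ring
  -- closed form for I
  have hIf : ∀ k : ℕ, I k = Real.Gamma (γ + k + 1) / α ^ k *
      ((I 0 - ((k : ℝ) / α) * J 0) / Real.Gamma (γ + 1) +
        (1 / α ^ 2) * ∑ m ∈ Finset.Icc 1 k,
          ((k : ℝ) + 1 - (m : ℝ)) * α ^ m / Real.Gamma (γ + 1 + (m : ℝ))) := by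
    intro k
    induction k with
    | zero =>
      simp
      field_simp
    | succ k ih =>
      have hrec := hIrec k
      have hIk1 : I (k + 1) = ((γ + k + 1) * I k - J (k + 1)) / α := by
        field_simp [← hrec]
        linarith [hrec]
      have hsum : ∑ m ∈ Finset.Icc 1 (k + 1),
            (((k : ℝ) + 1) + 1 - (m : ℝ)) * α ^ m / Real.Gamma (γ + 1 + (m : ℝ))
          = (∑ m ∈ Finset.Icc 1 k,
              ((k : ℝ) + 1 - (m : ℝ)) * α ^ m / Real.Gamma (γ + 1 + (m : ℝ)))
            + ((∑ m ∈ Finset.Icc 1 k, α ^ m / Real.Gamma (γ + 1 + (m : ℝ)))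
              + α ^ (k + 1) / Real.Gamma (γ + 1 + ((k : ℝ) + 1))) := by
        rw [Finset.sum_Icc_succ_top (by omega)]
        have hc : ∑ m ∈ Finset.Icc 1 k,
              (((k : ℝ) + 1) + 1 - (m : ℝ)) * α ^ m / Real.Gamma (γ + 1 + (m : ℝ))
            = ∑ m ∈ Finset.Icc 1 k,
              (((k : ℝ) + 1 - (m : ℝ)) * α ^ m / Real.Gamma (γ + 1 + (m : ℝ))
                + α ^ m / Real.Gamma (γ + 1 + (m : ℝ))) :=
          Finset.sum_congr rfl (fun m _ => by ring)
        rw [hc, Finset.sum_add_distrib]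
        push_cast
        ring
      rw [hIk1, ih, hJf (k + 1)]
      push_cast
      rw [hΓsucc k, hsum, hΓ11 k]
      rw [show ∑ m ∈ Finset.Icc 1 (k+1), α ^ m / Real.Gamma (γ + 1 + (m : ℝ))
          = (∑ m ∈ Finset.Icc 1 k, α ^ m / Real.Gamma (γ + 1 + (m : ℝ)))
            + α ^ (k + 1) / Real.Gamma (γ + 1 + ((k : ℝ) + 1)) by
        rw [Finset.sum_Icc_succ_top (by omega)]; push_cast; ring_nf]
      rw [hΓ11 k]
      have h1 := hΓk k
      have h2 := (hpos k).ne'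
      field_simp
      ring
  have hJ00 : J 0 = J0 := by
    rw [hJ, hJ0]
    norm_num
  rw [hJ00] at hIf
  exact hIf n
end

section
/- Let α ≥ 0 and K ≥ 0 be real numbers, and for m ∈ ℕ define 𝒜_m(K) = ∑_{j=0}^m binom(m,j)·α^j·Γ(m+K−j+1). Then for every m ≥ 1, 𝒜_m(K) ≤ Γ(m+K+1)·e^{α·m/(m+K)}. -/
noncomputable def scrA (α K : ℝ) (m : ℕ) : ℝ :=
  ∑ j ∈ Finset.range (m + 1),
    (m.choose j : ℝ) * α ^ j * Real.Gamma ((m : ℝ) + K - (j : ℝ) + 1)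

lemma key13 (K : ℝ) (hK : 0 ≤ K) (m : ℕ) :
    ∀ j ≤ m, (m.choose j : ℝ) * Real.Gamma ((m:ℝ) + K - (j:ℝ) + 1)
      * ((m:ℝ) + K) ^ j * (j.factorial : ℝ)
      ≤ Real.Gamma ((m:ℝ) + K + 1) * (m:ℝ) ^ j := by
  intro j
  induction j with
  | zero => intro _; simp
  | succ j ih =>
    intro hj
    have hj' : j ≤ m := le_of_lt (Nat.lt_of_succ_le hj)
    have hIH := ih hj'
    have hjm : (j:ℝ) + 1 ≤ (m:ℝ) := by exact_mod_cast hj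
    have hx : (0:ℝ) < (m:ℝ) + K - (j:ℝ) := by linarith
    have hg : Real.Gamma ((m:ℝ) + K - (j:ℝ) + 1)
        = ((m:ℝ) + K - (j:ℝ)) * Real.Gamma ((m:ℝ) + K - ((j:ℕ)+1:ℕ) + 1) := by
      have := Real.Gamma_add_one (ne_of_gt hx)
      rw [this]
      congr 1
      push_cast
      ring
    have hgpos : 0 < Real.Gamma ((m:ℝ) + K - ((j:ℕ)+1:ℕ) + 1) := by
      apply Real.Gamma_pos_of_pos
      push_cast
      linarith
    have hΓpos : 0 < Real.Gamma ((m:ℝ) + K + 1) := by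
      apply Real.Gamma_pos_of_pos
      have : (1:ℝ) ≤ (m:ℝ) := by linarith [Nat.cast_nonneg (α := ℝ) j]
      linarith
    have hchoose : ((m.choose (j+1)) : ℝ) * ((j:ℝ) + 1) = (m.choose j : ℝ) * ((m:ℝ) - (j:ℝ)) := by
      have := Nat.choose_succ_right_eq m j
      have h2 : ((m.choose (j+1) * (j+1) : ℕ) : ℝ) = ((m.choose j * (m - j) : ℕ) : ℝ) := by
        exact congrArg (Nat.cast : ℕ → ℝ) this
      push_cast [Nat.cast_sub hj'] at h2
      push_cast
      linarith
    have hfac : ((j+1).factorial : ℝ) = ((j:ℝ) + 1) * (j.factorial : ℝ) := by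
      push_cast [Nat.factorial_succ]; ring
    -- abbreviations
    set c := (m.choose j : ℝ) with hc
    set g' := Real.Gamma ((m:ℝ) + K - ((j:ℕ)+1:ℕ) + 1) with hg'
    set f := (j.factorial : ℝ) with hf
    set p := ((m:ℝ) + K) ^ j with hp
    set Γ := Real.Gamma ((m:ℝ) + K + 1) with hΓ
    have hp0 : 0 ≤ p := by positivity
    have hf0 : (0:ℝ) < f := by rw [hf]; exact_mod_cast j.factorial_pos
    have hc0 : (0:ℝ) ≤ c := by positivity
    have hm0 : (0:ℝ) ≤ (m:ℝ) ^ j := by positivity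
    have hIH' : c * (((m:ℝ) + K - (j:ℝ)) * g') * p * f ≤ Γ * (m:ℝ) ^ j := by
      rw [← hg]; exact hIH
    have hpow1 : ((m:ℝ) + K) ^ (j+1) = p * ((m:ℝ) + K) := by rw [hp, pow_succ]
    have hpow2 : (m:ℝ) ^ (j+1) = (m:ℝ) ^ j * (m:ℝ) := by rw [pow_succ]
    have key : (m.choose (j+1) : ℝ) * g' * (((m:ℝ)+K)^(j+1)) * (((j+1).factorial : ℝ))
        = c * ((m:ℝ) - (j:ℝ)) * g' * (p * ((m:ℝ) + K)) * f := by
      rw [hpow1, hfac]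
      have : (m.choose (j+1) : ℝ) * g' * (p * ((m:ℝ)+K)) * (((j:ℝ)+1) * f)
          = ((m.choose (j+1) : ℝ) * ((j:ℝ)+1)) * g' * (p * ((m:ℝ)+K)) * f := by ring
      rw [this, hchoose]
    rw [key]
    -- now show c*(m-j)*g'*(p*(m+K))*f ≤ Γ * m^(j+1)
    have step1 : c * ((m:ℝ) - (j:ℝ)) * g' * (p * ((m:ℝ) + K)) * f * ((m:ℝ) + K - (j:ℝ))
        ≤ Γ * (m:ℝ) ^ j * (((m:ℝ) - (j:ℝ)) * ((m:ℝ) + K)) := by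
      have h1 : c * (((m:ℝ) + K - (j:ℝ)) * g') * p * f * (((m:ℝ) - (j:ℝ)) * ((m:ℝ) + K))
          ≤ Γ * (m:ℝ) ^ j * (((m:ℝ) - (j:ℝ)) * ((m:ℝ) + K)) := by
        apply mul_le_mul_of_nonneg_right hIH'
        have : (0:ℝ) ≤ (m:ℝ) - (j:ℝ) := by linarith
        have : (0:ℝ) ≤ (m:ℝ) + K := by positivity
        positivity
      calc c * ((m:ℝ) - (j:ℝ)) * g' * (p * ((m:ℝ) + K)) * f * ((m:ℝ) + K - (j:ℝ))
          = c * (((m:ℝ) + K - (j:ℝ)) * g') * p * f * (((m:ℝ) - (j:ℝ)) * ((m:ℝ) + K)) := by ring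
        _ ≤ _ := h1
    have step2 : Γ * (m:ℝ) ^ j * (((m:ℝ) - (j:ℝ)) * ((m:ℝ) + K))
        ≤ Γ * (m:ℝ) ^ (j+1) * ((m:ℝ) + K - (j:ℝ)) := by
      rw [hpow2]
      have hineq : ((m:ℝ) - (j:ℝ)) * ((m:ℝ) + K) ≤ (m:ℝ) * ((m:ℝ) + K - (j:ℝ)) := by
        nlinarith [Nat.cast_nonneg (α := ℝ) j]
      calc Γ * (m:ℝ)^j * (((m:ℝ) - (j:ℝ)) * ((m:ℝ) + K))
          ≤ Γ * (m:ℝ)^j * ((m:ℝ) * ((m:ℝ) + K - (j:ℝ))) := by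
            apply mul_le_mul_of_nonneg_left hineq (by positivity)
        _ = Γ * ((m:ℝ)^j * (m:ℝ)) * ((m:ℝ) + K - (j:ℝ)) := by ring
    have := le_trans step1 step2
    have hfinal := (mul_le_mul_iff_of_pos_right hx).mp (by
      calc c * ((m:ℝ) - (j:ℝ)) * g' * (p * ((m:ℝ) + K)) * f * ((m:ℝ) + K - (j:ℝ))
          ≤ Γ * (m:ℝ) ^ (j+1) * ((m:ℝ) + K - (j:ℝ)) := this)
    exact hfinal

/-- For real `α ≥ 0` and `K ≥ 0`, for every `m ≥ 1`,
`𝒜_m(K) ≤ Γ(m+K+1) e^{αm/(m+K)}`. -/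
theorem stmt_13 (α K : ℝ) (hα : 0 ≤ α) (hK : 0 ≤ K) :
    ∀ m : ℕ, 1 ≤ m →
      scrA α K m ≤ Real.Gamma ((m : ℝ) + K + 1) * Real.exp (α * (m : ℝ) / ((m : ℝ) + K)) := by
  intro m hm
  have hm1 : (1:ℝ) ≤ (m:ℝ) := by exact_mod_cast hm
  have hmK : (0:ℝ) < (m:ℝ) + K := by linarith
  have hΓpos : 0 < Real.Gamma ((m:ℝ) + K + 1) := Real.Gamma_pos_of_pos (by linarith)
  set x := α * (m:ℝ) / ((m:ℝ) + K) with hx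
  have hx0 : 0 ≤ x := by positivity
  have hsum : scrA α K m ≤ Real.Gamma ((m:ℝ) + K + 1) * ∑ j ∈ Finset.range (m+1), x ^ j / (j.factorial : ℝ) := by
    rw [scrA, Finset.mul_sum]
    apply Finset.sum_le_sum
    intro j hjr
    have hj : j ≤ m := Nat.lt_succ_iff.mp (Finset.mem_range.mp hjr)
    have hkey := key13 K hK m j hj
    have hf0 : (0:ℝ) < (j.factorial : ℝ) := by exact_mod_cast j.factorial_pos
    have hp0 : (0:ℝ) < ((m:ℝ) + K) ^ j := by positivity
    -- key: choose * Γ_j ≤ Γ * m^j / ((m+K)^j * j!)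
    have h1 : (m.choose j : ℝ) * Real.Gamma ((m:ℝ) + K - (j:ℝ) + 1)
        ≤ Real.Gamma ((m:ℝ) + K + 1) * (m:ℝ)^j / (((m:ℝ) + K)^j * (j.factorial : ℝ)) := by
      rw [le_div_iff₀ (by positivity)]
      calc (m.choose j : ℝ) * Real.Gamma ((m:ℝ) + K - (j:ℝ) + 1) * (((m:ℝ)+K)^j * (j.factorial:ℝ))
          = (m.choose j : ℝ) * Real.Gamma ((m:ℝ) + K - (j:ℝ) + 1) * ((m:ℝ)+K)^j * (j.factorial:ℝ) := by ring
        _ ≤ _ := hkey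
    have hxj : x ^ j = α ^ j * (m:ℝ)^j / ((m:ℝ)+K)^j := by
      rw [hx, div_pow, mul_pow]
    calc (m.choose j : ℝ) * α ^ j * Real.Gamma ((m:ℝ) + K - (j:ℝ) + 1)
        = α ^ j * ((m.choose j : ℝ) * Real.Gamma ((m:ℝ) + K - (j:ℝ) + 1)) := by ring
      _ ≤ α ^ j * (Real.Gamma ((m:ℝ) + K + 1) * (m:ℝ)^j / (((m:ℝ) + K)^j * (j.factorial : ℝ))) := by
          apply mul_le_mul_of_nonneg_left h1 (by positivity)
      _ = Real.Gamma ((m:ℝ) + K + 1) * (x ^ j / (j.factorial : ℝ)) := by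
          rw [hxj]; field_simp
  calc scrA α K m ≤ Real.Gamma ((m:ℝ) + K + 1) * ∑ j ∈ Finset.range (m+1), x ^ j / (j.factorial : ℝ) := hsum
    _ ≤ Real.Gamma ((m:ℝ) + K + 1) * Real.exp x :=
        mul_le_mul_of_nonneg_left (Real.sum_le_exp_of_nonneg hx0 (m+1)) (le_of_lt hΓpos)
end

section
/- Let α ≥ 0 and K ≥ 0 be real numbers, and for m ∈ ℕ define 𝒜_m(K) = ∑_{j=0}^m binom(m,j)·α^j·Γ(m+K−j+1). Then 𝒜_m(K)/Γ(m+K+1) converges to e^α as m → ∞. -/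
open Filter Finset

lemma gamma_prod (K : ℝ) (hK : 0 ≤ K) :
    ∀ j m : ℕ, j ≤ m →
    Real.Gamma ((m : ℝ) + K + 1)
      = Real.Gamma ((m : ℝ) + K - j + 1) * ∏ i ∈ range j, ((m : ℝ) + K - i) := by
  intro j
  induction j with
  | zero => intro m _; simp
  | succ j ih =>
    intro m hm
    have hj : j ≤ m := le_of_lt (Nat.lt_of_succ_le hm)
    have hpos : (0:ℝ) < (m : ℝ) + K - j := by
      have : (j:ℝ) + 1 ≤ (m:ℝ) := by exact_mod_cast hm
      linarith
    have h1 : Real.Gamma ((m : ℝ) + K - j + 1)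
        = ((m : ℝ) + K - j) * Real.Gamma ((m : ℝ) + K - j) :=
      Real.Gamma_add_one (ne_of_gt hpos)
    have h2 : ((m : ℝ) + K - j) = ((m : ℝ) + K - (j + 1 : ℕ) + 1) := by
      push_cast; ring
    rw [ih m hj, h1, h2, prod_range_succ]
    push_cast
    ring

lemma choose_eq (m j : ℕ) (hj : j ≤ m) :
    (m.choose j : ℝ) = (∏ i ∈ range j, ((m : ℝ) - i)) / (j.factorial : ℝ) := by
  have h : m.descFactorial j = j.factorial * m.choose j :=
    Nat.descFactorial_eq_factorial_mul_choose m j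
  have h2 : (m.descFactorial j : ℝ) = ∏ i ∈ range j, ((m : ℝ) - i) := by
    rw [Nat.descFactorial_eq_prod_range]
    push_cast [Nat.cast_prod]
    refine prod_congr rfl fun i hi => ?_
    rw [Nat.cast_sub (le_trans (le_of_lt (mem_range.mp hi)) hj)]
  have h3 : (j.factorial : ℝ) * (m.choose j : ℝ) = ∏ i ∈ range j, ((m : ℝ) - i) := by
    rw [← h2]; exact_mod_cast congrArg (Nat.cast : ℕ → ℝ) h.symm
  have hfac : (0:ℝ) < (j.factorial : ℝ) := by positivity
  field_simp
  linarith [h3]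

/-- For real `α ≥ 0` and `K ≥ 0`,
`𝒜_m(K)/Γ(m+K+1) → e^α` as `m → ∞`. -/
theorem stmt_14 (α K : ℝ) (hα : 0 ≤ α) (hK : 0 ≤ K) :
    Filter.Tendsto (fun m : ℕ => scrA α K m / Real.Gamma ((m : ℝ) + K + 1))
      Filter.atTop (nhds (Real.exp α)) := by
  set f : ℕ → ℕ → ℝ := fun m j =>
    if j ≤ m then α ^ j / (j.factorial : ℝ) * ∏ i ∈ range j, (((m:ℝ) - i) / ((m:ℝ) + K - i))
    else 0 with hf
  -- the term identity
  have hterm : ∀ m j : ℕ, j ≤ m →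
      (m.choose j : ℝ) * α ^ j * Real.Gamma ((m : ℝ) + K - j + 1)
        / Real.Gamma ((m : ℝ) + K + 1) = f m j := by
    intro m j hj
    have hGp : Real.Gamma ((m : ℝ) + K + 1)
        = Real.Gamma ((m : ℝ) + K - j + 1) * ∏ i ∈ range j, ((m : ℝ) + K - i) :=
      gamma_prod K hK j m hj
    have hGjpos : 0 < Real.Gamma ((m : ℝ) + K - j + 1) := by
      apply Real.Gamma_pos_of_pos
      have : (j:ℝ) ≤ (m:ℝ) := by exact_mod_cast hj
      linarith
    have hppos : ∀ i ∈ range j, (0:ℝ) < (m : ℝ) + K - i := by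
      intro i hi
      have : (i:ℝ) < (m:ℝ) := by
        exact_mod_cast lt_of_lt_of_le (mem_range.mp hi) hj
      linarith
    have hprodpos : (0:ℝ) < ∏ i ∈ range j, ((m : ℝ) + K - i) := prod_pos hppos
    have hfac : (0:ℝ) < (j.factorial : ℝ) := by positivity
    rw [hf]
    simp only [hj, if_true]
    rw [hGp, choose_eq m j hj, prod_div_distrib]
    field_simp
    try ring
  -- rewrite the sequence as a tsum
  have hrw : ∀ m : ℕ, scrA α K m / Real.Gamma ((m : ℝ) + K + 1) = ∑' j, f m j := by
    intro m
    rw [tsum_eq_sum (s := range (m+1)) (f := f m) (by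
      intro j hj
      rw [hf]
      simp only [ite_eq_right_iff]
      intro h
      exact absurd (mem_range.mpr (Nat.lt_succ_of_le h)) hj)]
    rw [scrA, sum_div]
    refine sum_congr rfl fun j hj => ?_
    exact hterm m j (Nat.lt_succ_iff.mp (mem_range.mp hj))
  -- the limit of each term
  have hlim : ∀ j : ℕ, Tendsto (fun m => f m j) atTop (nhds (α ^ j / (j.factorial : ℝ))) := by
    intro j
    have hprod : Tendsto (fun m : ℕ => ∏ i ∈ range j, (((m:ℝ) - i) / ((m:ℝ) + K - i)))
        atTop (nhds 1) := by
      have := tendsto_finset_prod (f := fun (i : ℕ) (m : ℕ) => ((m:ℝ) - i) / ((m:ℝ) + K - i))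
        (x := atTop) (a := fun _ => (1:ℝ)) (range j) ?_
      · simpa using this
      · intro i _
        have hd : Tendsto (fun m : ℕ => (m:ℝ) + K - i) atTop atTop := by
          have : Tendsto (fun m : ℕ => (m:ℝ) + (K - i)) atTop atTop :=
            tendsto_atTop_add_const_right atTop (K - (i:ℝ)) tendsto_natCast_atTop_atTop
          exact this.congr (fun m => by ring)
        have h0 : Tendsto (fun m : ℕ => K * ((m:ℝ) + K - i)⁻¹) atTop (nhds (K * 0)) :=
          Tendsto.const_mul K hd.inv_tendsto_atTop
        have h1 := (tendsto_const_nhds (x := (1:ℝ)) (f := atTop (α := ℕ))).sub h0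
        rw [mul_zero, sub_zero] at h1
        apply h1.congr'
        filter_upwards [eventually_ge_atTop (i+1)] with m hm
        have hpos : (0:ℝ) < (m:ℝ) + K - i := by
          have : (i:ℝ) + 1 ≤ (m:ℝ) := by exact_mod_cast hm
          linarith
        field_simp
        ring
    have h2 := (tendsto_const_nhds (x := α ^ j / (j.factorial : ℝ)) (f := atTop (α := ℕ))).mul hprod
    rw [mul_one] at h2
    apply h2.congr'
    filter_upwards [eventually_ge_atTop j] with m hm
    rw [hf]; simp [hm]
  -- the bound
  have hbound : ∀ m : ℕ, ∀ j : ℕ, ‖f m j‖ ≤ α ^ j / (j.factorial : ℝ) := by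
    intro m j
    have hfac : (0:ℝ) < (j.factorial : ℝ) := by positivity
    rw [hf]
    by_cases hj : j ≤ m
    · simp only [hj, if_true]
      have hnn : ∀ i ∈ range j, (0:ℝ) ≤ ((m:ℝ) - i) / ((m:ℝ) + K - i) := by
        intro i hi
        have h1 : (i:ℝ) < (m:ℝ) := by
          exact_mod_cast lt_of_lt_of_le (mem_range.mp hi) hj
        have h2 : (0:ℝ) < (m:ℝ) + K - i := by linarith
        have h3 : (0:ℝ) ≤ (m:ℝ) - i := by linarith
        positivity
      have hle : ∀ i ∈ range j, ((m:ℝ) - i) / ((m:ℝ) + K - i) ≤ 1 := by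
        intro i hi
        have h1 : (i:ℝ) < (m:ℝ) := by
          exact_mod_cast lt_of_lt_of_le (mem_range.mp hi) hj
        have h2 : (0:ℝ) < (m:ℝ) + K - i := by linarith
        rw [div_le_one h2]
        linarith
      have hp01 : (0:ℝ) ≤ ∏ i ∈ range j, (((m:ℝ) - i) / ((m:ℝ) + K - i)) := prod_nonneg hnn
      have hp1 : ∏ i ∈ range j, (((m:ℝ) - i) / ((m:ℝ) + K - i)) ≤ 1 := prod_le_one hnn hle
      rw [Real.norm_eq_abs, abs_of_nonneg (by positivity)]
      calc α ^ j / (j.factorial : ℝ) * ∏ i ∈ range j, (((m:ℝ) - i) / ((m:ℝ) + K - i))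
          ≤ α ^ j / (j.factorial : ℝ) * 1 := by
            apply mul_le_mul_of_nonneg_left hp1 (by positivity)
        _ = α ^ j / (j.factorial : ℝ) := mul_one _
    · simp only [hj, if_false, norm_zero]
      positivity
  -- assemble
  have hexp : Real.exp α = ∑' j : ℕ, α ^ j / (j.factorial : ℝ) := by
    rw [Real.exp_eq_exp_ℝ, NormedSpace.exp_eq_tsum_div]
  rw [hexp]
  have := tendsto_tsum_of_dominated_convergence
    (f := f) (g := fun j => α ^ j / (j.factorial : ℝ))
    (bound := fun j => α ^ j / (j.factorial : ℝ)) (𝓕 := atTop)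
    (Real.summable_pow_div_factorial α) hlim
    (Eventually.of_forall hbound)
  apply this.congr
  intro m
  exact (hrw m).symm
end

section
/- The double series identity ∑_{j=0}^∞ (−1)^j·(j + 3/2)·∑_{m=0}^∞ (−1)^m·(1/2)^m/(m!·(m+j)!) = (J_0(√2) − √2·J_1(√2))/2 holds, where the inner series equals (√2)^j·J_j(√2) and the outer series converges absolutely. -/
namespace Stmt16

noncomputable def f (j m : ℕ) : ℝ :=
  (-1 : ℝ) ^ m * (1 / 2 : ℝ) ^ m / ((m.factorial : ℝ) * ((m + j).factorial : ℝ))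

noncomputable def S (j : ℕ) : ℝ := ∑' m : ℕ, f j m

lemma abs_f_le (j m : ℕ) : ‖f j m‖ ≤ (1/2:ℝ)^m * (1 / j.factorial) := by
  have h1 : (1:ℝ) ≤ (m.factorial : ℝ) := by exact_mod_cast Nat.one_le_iff_ne_zero.mpr m.factorial_ne_zero
  have h2 : (j.factorial : ℝ) ≤ ((m+j).factorial : ℝ) := by
    exact_mod_cast Nat.factorial_le (Nat.le_add_left j m)
  have hj : (0:ℝ) < j.factorial := by exact_mod_cast j.factorial_pos
  have hm : (0:ℝ) < m.factorial := by exact_mod_cast m.factorial_pos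
  have hmj : (0:ℝ) < (m+j).factorial := by exact_mod_cast (m+j).factorial_pos
  have hval : ‖f j m‖ = (1/2:ℝ)^m / ((m.factorial:ℝ) * (m+j).factorial) := by
    rw [Real.norm_eq_abs, f, abs_div]
    congr 1
    · rw [abs_mul, abs_pow, abs_pow, abs_neg, abs_one, one_pow, one_mul]
      congr 1
      rw [abs_of_pos]; norm_num
    · rw [abs_of_pos (by positivity)]
  rw [hval, mul_one_div]
  apply div_le_div_of_nonneg_left (by positivity) hj
  calc (j.factorial : ℝ) ≤ (m+j).factorial := h2
    _ ≤ m.factorial * (m+j).factorial := by nlinarith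

lemma summable_half : Summable (fun m : ℕ => (1/2:ℝ)^m) :=
  summable_geometric_of_lt_one (by norm_num) (by norm_num)

lemma summable_f (j : ℕ) : Summable (f j) :=
  Summable.of_norm_bounded (summable_half.mul_right _) (abs_f_le j)

lemma abs_S_le (j : ℕ) : |S j| ≤ 2 / j.factorial := by
  have h := norm_tsum_le_tsum_norm (Summable.of_norm_bounded (summable_half.mul_right ((1:ℝ)/j.factorial)) (abs_f_le j) : Summable (f j)).norm
  calc |S j| ≤ ∑' m, ‖f j m‖ := h
    _ ≤ ∑' m : ℕ, (1/2:ℝ)^m * (1 / j.factorial) := by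
        apply Summable.tsum_le_tsum (abs_f_le j) ((summable_f j).norm) (summable_half.mul_right _)
    _ = (∑' m : ℕ, (1/2:ℝ)^m) * (1 / j.factorial) := tsum_mul_right
    _ = 2 / j.factorial := by
        rw [tsum_geometric_of_lt_one (by norm_num) (by norm_num)]; norm_num [div_eq_mul_inv]

lemma recurrence (j : ℕ) : S (j+2) = 2*((j:ℝ)+1) * S (j+1) - 2 * S j := by
  set h : ℕ → ℝ := fun m => 2*((j:ℝ)+1) * f (j+1) m - 2 * f j m with hh
  have hsum : Summable h := ((summable_f (j+1)).mul_left _).sub ((summable_f j).mul_left 2)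
  have h0 : h 0 = 0 := by
    simp only [hh, f]
    have hj1 : ((j:ℝ)+1) ≠ 0 := by positivity
    have hjf : (j.factorial:ℝ) ≠ 0 := by
      have : (0:ℝ) < j.factorial := by exact_mod_cast j.factorial_pos
      linarith
    norm_num [Nat.factorial]
    field_simp
    ring
  have hsucc : ∀ k : ℕ, h (k+1) = f (j+2) k := by
    intro k
    simp only [hh, f]
    have e1 : (k+1) + (j+1) = (k + j + 1) + 1 := by ring
    have e2 : (k+1) + j = k + j + 1 := by ring
    have e3 : k + (j+2) = (k + j + 1) + 1 := by ring
    rw [e1, e2, e3, Nat.factorial_succ (k+j+1), Nat.factorial_succ k]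
    push_cast
    have hk : (0:ℝ) < k.factorial := by exact_mod_cast k.factorial_pos
    have hkj : (0:ℝ) < (k+j+1).factorial := by exact_mod_cast (k+j+1).factorial_pos
    field_simp
    ring
  have key : ∑' m, h m = ∑' k, f (j+2) k := by
    rw [hsum.tsum_eq_zero_add, h0, zero_add]
    exact tsum_congr hsucc
  have lhs : ∑' m, h m = 2*((j:ℝ)+1) * S (j+1) - 2 * S j := by
    rw [hh]
    rw [Summable.tsum_sub ((summable_f (j+1)).mul_left _) ((summable_f j).mul_left 2),
      tsum_mul_left, tsum_mul_left]
    rfl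
  rw [← lhs, key]; rfl

lemma part1 (j : ℕ) : S j = (Real.sqrt 2) ^ j * besselJ (j : ℝ) (Real.sqrt 2) := by
  have hs2 : Real.sqrt 2 ^ 2 = 2 := Real.sq_sqrt (by norm_num)
  have hterm : ∀ m : ℕ,
      ((-1 : ℝ) ^ m / (m.factorial * Real.Gamma ((m : ℝ) + (j:ℝ) + 1)))
        * (Real.sqrt 2 / 2) ^ (2 * (m : ℝ) + (j:ℝ))
      = f j m * (Real.sqrt 2 / 2) ^ j := by
    intro m
    have hg : (m : ℝ) + (j:ℝ) + 1 = ((m + j : ℕ) : ℝ) + 1 := by push_cast; ring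
    rw [hg, Real.Gamma_nat_eq_factorial]
    have he : (2 * (m : ℝ) + (j:ℝ)) = ((2*m + j : ℕ) : ℝ) := by push_cast; ring
    rw [he, Real.rpow_natCast]
    have hp : (Real.sqrt 2 / 2) ^ (2*m + j) = (1/2:ℝ)^m * (Real.sqrt 2 / 2) ^ j := by
      rw [pow_add, pow_mul]
      congr 1
      congr 1
      rw [div_pow, hs2]; norm_num
    rw [hp, f]
    ring
  rw [besselJ, tsum_congr hterm, tsum_mul_right, ← S]
  rw [mul_comm (Real.sqrt 2 ^ j), mul_assoc, ← mul_pow]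
  have : Real.sqrt 2 / 2 * Real.sqrt 2 = 1 := by
    rw [div_mul_eq_mul_div, ← sq, hs2]; norm_num
  rw [this, one_pow, mul_one]

noncomputable def g (j : ℕ) : ℝ := (-1 : ℝ) ^ j * ((j : ℝ) + 3/2) * S j

lemma abs_g_le (j : ℕ) : |g j| ≤ 6 * ((2:ℝ)^j / j.factorial) := by
  have h1 : |g j| = ((j:ℝ) + 3/2) * |S j| := by
    rw [g, abs_mul, abs_mul, abs_pow, abs_neg, abs_one, one_pow, one_mul,
      abs_of_pos (by positivity)]
  have h2 : ((j:ℝ) + 3/2) ≤ 3 * 2^j := by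
    have ha : (j:ℝ) < 2^j := by exact_mod_cast Nat.lt_two_pow_self
    have hb : (1:ℝ) ≤ 2^j := by exact_mod_cast Nat.one_le_two_pow
    nlinarith
  have hj : (0:ℝ) < j.factorial := by exact_mod_cast j.factorial_pos
  calc |g j| = ((j:ℝ) + 3/2) * |S j| := h1
    _ ≤ (3 * 2^j) * (2 / j.factorial) := by
        apply mul_le_mul h2 (abs_S_le j) (abs_nonneg _) (by positivity)
    _ = 6 * ((2:ℝ)^j / j.factorial) := by ring

lemma summable_abs_g : Summable (fun j => |g j|) := by
  apply Summable.of_nonneg_of_le (fun j => abs_nonneg _) abs_g_le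
  exact (Real.summable_pow_div_factorial 2).mul_left 6

noncomputable def G (j : ℕ) : ℝ := (-1 : ℝ) ^ j * (S j / 2 + S (j-1))

lemma telescope (k : ℕ) : g (k+1) = G (k+1) - G (k+2) := by
  have hr := recurrence k
  simp only [g, G, Nat.add_sub_cancel]
  have e1 : (k+2) - 1 = k + 1 := rfl
  rw [e1, hr]
  push_cast
  ring

lemma G_tendsto : Filter.Tendsto (fun N => G (N+1)) Filter.atTop (nhds 0) := by
  refine squeeze_zero_norm (a := fun N => 3 * ((1:ℝ)^N / N.factorial)) ?_ ?_
  · intro N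
    have h1 : |S (N+1)| ≤ 2 / (N+1).factorial := abs_S_le (N+1)
    have h2 : |S N| ≤ 2 / N.factorial := abs_S_le N
    have hN : (0:ℝ) < N.factorial := by exact_mod_cast N.factorial_pos
    have hN1 : (N.factorial:ℝ) ≤ (N+1).factorial := by
      exact_mod_cast Nat.factorial_le (Nat.le_succ N)
    have hN1' : (0:ℝ) < (N+1).factorial := by exact_mod_cast (N+1).factorial_pos
    have key : ‖G (N+1)‖ ≤ |S (N+1)| / 2 + |S N| := by
      rw [G, Nat.add_sub_cancel, Real.norm_eq_abs, abs_mul, abs_pow, abs_neg, abs_one,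
        one_pow, one_mul]
      calc |S (N+1) / 2 + S N| ≤ |S (N+1) / 2| + |S N| := abs_add_le _ _
        _ = |S (N+1)| / 2 + |S N| := by rw [abs_div, abs_of_pos (by norm_num : (0:ℝ) < 2)]
    calc ‖G (N+1)‖ ≤ |S (N+1)| / 2 + |S N| := key
      _ ≤ (2 / (N+1).factorial) / 2 + 2 / N.factorial := by gcongr
      _ = 1 / (N+1).factorial + 2 / N.factorial := by ring
      _ ≤ 1 / N.factorial + 2 / N.factorial := by gcongr
      _ = 3 * ((1:ℝ)^N / N.factorial) := by rw [one_pow]; ring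
  · have := ((Real.summable_pow_div_factorial 1).tendsto_atTop_zero).const_mul 3
    simpa using this

lemma part3 : ∑' j, g j = (S 0 - S 1) / 2 := by
  have hsum : Summable g := summable_abs_iff.mp summable_abs_g
  have h1 : Filter.Tendsto (fun n => ∑ j ∈ Finset.range n, g j) Filter.atTop (nhds (∑' j, g j)) :=
    hsum.hasSum.tendsto_sum_nat
  have h2 : Filter.Tendsto (fun N => ∑ j ∈ Finset.range (N+1), g j) Filter.atTop
      (nhds (∑' j, g j)) := h1.comp (Filter.tendsto_add_atTop_nat 1)
  have hps : ∀ N, ∑ j ∈ Finset.range (N+1), g j = (S 0 - S 1) / 2 - G (N+1) := by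
    intro N
    rw [Finset.sum_range_succ']
    have : ∀ k ∈ Finset.range N, g (k+1) = (fun i => G (i+1)) k - (fun i => G (i+1)) (k+1) := by
      intro k _; exact telescope k
    rw [Finset.sum_congr rfl this, Finset.sum_range_sub']
    have hg0 : g 0 = 3/2 * S 0 := by simp [g]
    have hG1 : G (0+1) = -(S 1 / 2 + S 0) := by simp [G]
    rw [hg0, hG1]
    ring
  have h3 : Filter.Tendsto (fun N => ∑ j ∈ Finset.range (N+1), g j) Filter.atTop
      (nhds ((S 0 - S 1) / 2)) := by
    simp only [hps]
    have := G_tendsto.const_sub ((S 0 - S 1) / 2)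
    simpa using this
  exact tendsto_nhds_unique h2 h3

end Stmt16

/-- The inner series `∑_m (−1)^m (1/2)^m/(m!(m+j)!)` equals
`(√2)^j J_j(√2)`, the outer series converges absolutely, and
`∑_j (−1)^j (j+3/2) ∑_m (−1)^m (1/2)^m/(m!(m+j)!) = (J₀(√2) − √2 J₁(√2))/2`. -/
theorem stmt_16 :
    (∀ j : ℕ,
      ∑' m : ℕ, ((-1 : ℝ) ^ m * (1 / 2 : ℝ) ^ m /
          ((m.factorial : ℝ) * ((m + j).factorial : ℝ))) =
        (Real.sqrt 2) ^ j * besselJ (j : ℝ) (Real.sqrt 2)) ∧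
    Summable (fun j : ℕ =>
      |(-1 : ℝ) ^ j * ((j : ℝ) + 3 / 2) *
        ∑' m : ℕ, ((-1 : ℝ) ^ m * (1 / 2 : ℝ) ^ m /
          ((m.factorial : ℝ) * ((m + j).factorial : ℝ)))|) ∧
    ∑' j : ℕ, ((-1 : ℝ) ^ j * ((j : ℝ) + 3 / 2) *
        ∑' m : ℕ, ((-1 : ℝ) ^ m * (1 / 2 : ℝ) ^ m /
          ((m.factorial : ℝ) * ((m + j).factorial : ℝ)))) =
      (besselJ 0 (Real.sqrt 2) - Real.sqrt 2 * besselJ 1 (Real.sqrt 2)) / 2 := by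
  refine ⟨fun j => Stmt16.part1 j, Stmt16.summable_abs_g, ?_⟩
  have h0 : Stmt16.S 0 = besselJ 0 (Real.sqrt 2) := by
    have := Stmt16.part1 0; simpa using this
  have h1 : Stmt16.S 1 = Real.sqrt 2 * besselJ 1 (Real.sqrt 2) := by
    have := Stmt16.part1 1; simpa using this
  have := Stmt16.part3
  rw [h0, h1] at this
  exact this
end

section
/- For every real λ ≥ 0, ∫_0^1 (1−x)^{−λ/(2+λ)}·(x+1)·e^{x/(2+λ)} dx = 2+λ. -/
open Set MeasureTheory intervalIntegral Filter

/-- For every real `λ ≥ 0`,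
`∫₀¹ (1−x)^{−λ/(2+λ)} (x+1) e^{x/(2+λ)} dx = 2+λ`. -/
theorem stmt_17 (l : ℝ) (hl : 0 ≤ l) :
    (∫ x in (0:ℝ)..1,
      (1 - x) ^ (-(l / (2 + l))) * (x + 1) * Real.exp (x / (2 + l))) = 2 + l := by
  have hc : (0:ℝ) < 2 + l := by linarith
  set c : ℝ := 2 + l with hcdef
  have hexp : -(l / c) = 2 / c - 1 := by
    field_simp
    rw [hcdef]; ring
  set F : ℝ → ℝ := fun x => -c * ((1 - x) ^ (2 / c) * Real.exp (x / c)) with hF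
  have hp : (0:ℝ) < 2 / c := by positivity
  have hderiv : ∀ x ∈ Ioo (0:ℝ) 1, HasDerivAt F
      ((1 - x) ^ (-(l / c)) * (x + 1) * Real.exp (x / c)) x := by
    intro x hx
    have h1x : (0:ℝ) < 1 - x := by linarith [hx.2]
    have hbase : HasDerivAt (fun x : ℝ => (1 - x) ^ (2 / c))
        ((-1) * (2 / c) * (1 - x) ^ (2 / c - 1)) x :=
      ((hasDerivAt_id x).const_sub 1).rpow_const (Or.inl h1x.ne')
    have hexp' : HasDerivAt (fun x : ℝ => Real.exp (x / c))
        (Real.exp (x / c) * (1 / c)) x :=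
      (Real.hasDerivAt_exp (x / c)).comp (h := fun x => x / c) x ((hasDerivAt_id x).div_const c)
    have := ((hbase.mul hexp').const_mul (-c))
    convert this using 1
    all_goals try rfl
    have hsplit : (1 - x) ^ (2 / c) = (1 - x) ^ (2 / c - 1) * (1 - x) := by
      rw [← Real.rpow_add_one h1x.ne']; ring_nf
    rw [hexp, hsplit]
    field_simp
    ring
  have hint : IntervalIntegrable
      (fun x => (1 - x) ^ (-(l / c)) * (x + 1) * Real.exp (x / c)) volume 0 1 := by
    have hr : (-1:ℝ) < -(l / c) := by
      rw [neg_lt_neg_iff]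
      rw [div_lt_one hc]; linarith
    have h1 : IntervalIntegrable (fun x : ℝ => x ^ (-(l / c))) volume 0 1 :=
      intervalIntegral.intervalIntegrable_rpow' hr
    have h2 : IntervalIntegrable (fun x : ℝ => (1 - x) ^ (-(l / c))) volume 0 1 := by
      have := h1.comp_sub_left 1
      simpa using this.symm
    have h3 := h2.mul_continuousOn (g := fun x => (x + 1) * Real.exp (x / c))
      (by fun_prop)
    simpa [mul_assoc] using h3
  have hcont : Continuous F := by
    apply Continuous.mul continuous_const
    apply Continuous.mul _ (by fun_prop)
    refine continuous_iff_continuousAt.2 fun x => ?_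
    exact (Real.continuousAt_rpow_const _ _ (Or.inr hp.le)).comp
      (continuous_const.sub continuous_id).continuousAt
  have key := intervalIntegral.integral_eq_sub_of_hasDerivAt_of_tendsto
    (f := F) (a := 0) (b := 1) one_pos hderiv hint
    ((hcont.tendsto 0).mono_left nhdsWithin_le_nhds)
    ((hcont.tendsto 1).mono_left nhdsWithin_le_nhds)
  rw [key, hF]
  simp [Real.zero_rpow hp.ne', Real.one_rpow]
end
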